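/- Let (X,T) be a TDS with metric d and μ an ergodic T-invariant Borel probability measure. Then the upper Brin–Katok local entropy at scale 2ε is at most the infimum of the Kolmogorov–Sinai entropies h_μ(T,P) over all finite Borel measurable partitions P with diameter at most ε: h̄_μ^{BK}(T, 2ε) ≤ inf_{diam(P) ≤ ε} h_μ(T,P). -/

import Mathlib

open MeasureTheory Filter Set Metric Topology ENNReal

variable {X : Type*} [MetricSpace X]

/-- The `n`-th Bowen metric `d_n(x,y) = max_{0 ≤ j ≤ n-1} d(T^j x, T^j y)`. -/
noncomputable def bowenDist (T : X → X) (n : ℕ) (x y : X) : ℝ :=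
  ⨆ j ∈ Finset.range n, dist (T^[j] x) (T^[j] y)

/-- The open Bowen ball of order `n` and radius `ε`. -/
def bowenBall (T : X → X) (n : ℕ) (x : X) (ε : ℝ) : Set X :=
  {y | bowenDist T n x y < ε}

/-- The closed Bowen ball of order `n` and radius `ε`. -/
def bowenClosedBall (T : X → X) (n : ℕ) (x : X) (ε : ℝ) : Set X :=
  {y | bowenDist T n x y ≤ ε}

/-- `F` is `(n,ε)`-separated. -/
def IsBowenSeparated (T : X → X) (n : ℕ) (ε : ℝ) (F : Set X) : Prop :=
  ∀ x ∈ F, ∀ y ∈ F, x ≠ y → ε < bowenDist T n x y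

/-- Maximal cardinality of an `(n,ε)`-separated subset of `Z`. -/
noncomputable def sepNum (T : X → X) (n : ℕ) (ε : ℝ) (Z : Set X) : ℕ :=
  sSup {k | ∃ F : Finset X, ↑F ⊆ Z ∧ IsBowenSeparated T n ε ↑F ∧ F.card = k}

/-- A finite Borel measurable partition of `X`. -/
def IsMeasPartition [MeasurableSpace X] (P : Finset (Set X)) : Prop :=
  (∀ A ∈ P, MeasurableSet A) ∧ (∀ A ∈ P, ∀ B ∈ P, A ≠ B → Disjoint A B) ∧
    (⋃ A ∈ P, A) = Set.univ

/-- A finite open cover of `X`. -/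
def IsOpenCover (U : Finset (Set X)) : Prop :=
  (∀ A ∈ U, IsOpen A) ∧ (⋃ A ∈ U, A) = Set.univ

/-- The `n`-th join `⋁_{j=0}^{n-1} T^{-j} P` of a finite family of sets. -/
noncomputable def joinPart (T : X → X) (P : Finset (Set X)) (n : ℕ) : Finset (Set X) := by
  classical
  exact (Fintype.piFinset (fun _ : Fin n => P)).image
    (fun f => ⋂ j : Fin n, T^[(j : ℕ)] ⁻¹' f j)

/-- Static entropy of a finite partition. -/
noncomputable def partEntropy [MeasurableSpace X] (μ : Measure X) (P : Finset (Set X)) : ℝ :=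
  ∑ A ∈ P, Real.negMulLog (μ A).toReal

/-- Kolmogorov–Sinai entropy of `T` w.r.t. the partition `P`. -/
noncomputable def ksEntropyPart [MeasurableSpace X] (T : X → X) (μ : Measure X)
    (P : Finset (Set X)) : ℝ :=
  limsup (fun n => partEntropy μ (joinPart T P n) / n) atTop

/-- Kolmogorov–Sinai entropy of `(X,T,μ)`. -/
noncomputable def ksEntropy [MeasurableSpace X] (T : X → X) (μ : Measure X) : ℝ≥0∞ :=
  ⨆ (P : Finset (Set X)) (_ : IsMeasPartition P), ENNReal.ofReal (ksEntropyPart T μ P)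

/-- `N_μ(V, c)`: the minimal cardinality of a subfamily of `V` whose union has
measure at least `c`. -/
noncomputable def coverNum [MeasurableSpace X] (μ : Measure X) (V : Finset (Set X)) (c : ℝ) : ℕ :=
  sInf {k | ∃ W : Finset (Set X), W ⊆ V ∧ W.card = k ∧ ENNReal.ofReal c ≤ μ (⋃ A ∈ W, A)}

/-- Shapira's entropy of the open cover `U` at level `δ`. -/
noncomputable def shapiraEnt [MeasurableSpace X] (T : X → X) (μ : Measure X)
    (U : Finset (Set X)) (δ : ℝ) : ℝ :=
  limsup (fun n => Real.log (coverNum μ (joinPart T U n) δ) / n) atTop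

/-- `R_μ^δ(T,n,ε)`: minimal number of Bowen `(n,ε)`-balls whose union has measure `> 1 - δ`. -/
noncomputable def katokCovNum [MeasurableSpace X] (T : X → X) (μ : Measure X) (n : ℕ)
    (ε δ : ℝ) : ℕ :=
  sInf {k | ∃ E : Finset X, E.card = k ∧
    1 - ENNReal.ofReal δ < μ (⋃ x ∈ E, bowenBall T n x ε)}

/-- Upper Katok `ε`-entropy at level `δ`. -/
noncomputable def katokUpperδ [MeasurableSpace X] (T : X → X) (μ : Measure X) (ε δ : ℝ) : ℝ≥0∞ :=
  limsup (fun n => ENNReal.ofReal (Real.log (katokCovNum T μ n ε δ)) / n) atTop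

/-- Lower Katok `ε`-entropy at level `δ`. -/
noncomputable def katokLowerδ [MeasurableSpace X] (T : X → X) (μ : Measure X) (ε δ : ℝ) : ℝ≥0∞ :=
  liminf (fun n => ENNReal.ofReal (Real.log (katokCovNum T μ n ε δ)) / n) atTop

/-- Upper Katok `ε`-entropy: the limit of `katokUpperδ` as `δ → 0`. -/
noncomputable def katokUpper [MeasurableSpace X] (T : X → X) (μ : Measure X) (ε : ℝ) : ℝ≥0∞ :=
  ⨆ δ ∈ Set.Ioo (0 : ℝ) 1, katokUpperδ T μ ε δ

/-- Lower Katok `ε`-entropy: the limit of `katokLowerδ` as `δ → 0`. -/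
noncomputable def katokLower [MeasurableSpace X] (T : X → X) (μ : Measure X) (ε : ℝ) : ℝ≥0∞ :=
  ⨆ δ ∈ Set.Ioo (0 : ℝ) 1, katokLowerδ T μ ε δ

/-- `-log μ(S)`, as an extended nonnegative real (`∞` when `μ S = 0`). -/
noncomputable def negLogMeas [MeasurableSpace X] (μ : Measure X) (S : Set X) : ℝ≥0∞ :=
  if μ S = 0 then ⊤ else ENNReal.ofReal (-Real.log (μ S).toReal)

/-- Upper Brin–Katok local `ε`-entropy of `μ`. -/
noncomputable def bkUpper [MeasurableSpace X] (T : X → X) (μ : Measure X) (ε : ℝ) : ℝ≥0∞ :=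
  ∫⁻ x, limsup (fun n => negLogMeas μ (bowenBall T n x ε) / n) atTop ∂μ

/-- Lower Brin–Katok local `ε`-entropy of `μ`. -/
noncomputable def bkLower [MeasurableSpace X] (T : X → X) (μ : Measure X) (ε : ℝ) : ℝ≥0∞ :=
  ∫⁻ x, liminf (fun n => negLogMeas μ (bowenBall T n x ε) / n) atTop ∂μ

/-- `∑ e^{-s n_i}` over a family of (center, order) pairs. -/
noncomputable def weightSum (s : ℝ) (I : Set (X × ℕ)) : ℝ≥0∞ :=
  ∑' p : I, ENNReal.ofReal (Real.exp (-(s * ((p : X × ℕ).2 : ℝ))))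

/-- Carathéodory–Pesin Bowen pre-measure `M(T,d,Z,s,N,ε)`. -/
noncomputable def bowenPre (T : X → X) (Z : Set X) (s : ℝ) (N : ℕ) (ε : ℝ) : ℝ≥0∞ :=
  ⨅ (I : Set (X × ℕ)) (_ : I.Countable ∧ (∀ p ∈ I, N ≤ p.2) ∧
      Z ⊆ ⋃ p ∈ I, bowenBall T p.2 p.1 ε), weightSum s I

/-- `M(T,d,Z,s,ε) = lim_{N→∞} M(T,d,Z,s,N,ε)`. -/
noncomputable def bowenCP (T : X → X) (Z : Set X) (s : ℝ) (ε : ℝ) : ℝ≥0∞ :=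
  ⨆ N, bowenPre T Z s N ε

/-- Bowen `ε`-entropy of the subset `Z`: the critical value of `s ↦ M(T,d,Z,s,ε)`. -/
noncomputable def bowenEnt (T : X → X) (Z : Set X) (ε : ℝ) : ℝ≥0∞ :=
  sInf {a : ℝ≥0∞ | ∃ s : ℝ, 0 ≤ s ∧ a = ENNReal.ofReal s ∧ bowenCP T Z s ε = 0}

/-- Packing pre-measure `P(T,d,Z,s,N,ε)`: supremum of `∑ e^{-n_i s}` over pairwise disjoint
families of closed Bowen balls with centers in `Z` and orders `≥ N`. -/
noncomputable def packPre (T : X → X) (Z : Set X) (s : ℝ) (N : ℕ) (ε : ℝ) : ℝ≥0∞ :=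
  ⨆ (I : Set (X × ℕ)) (_ : I.Countable ∧ (∀ p ∈ I, N ≤ p.2 ∧ p.1 ∈ Z) ∧
      I.PairwiseDisjoint (fun p => bowenClosedBall T p.2 p.1 ε)), weightSum s I

/-- `P(T,d,Z,s,ε) = lim_{N→∞} P(T,d,Z,s,N,ε)`. -/
noncomputable def packCP (T : X → X) (Z : Set X) (s : ℝ) (ε : ℝ) : ℝ≥0∞ :=
  ⨅ N, packPre T Z s N ε

/-- `𝒫(T,d,Z,s,ε) = inf {∑_i P(T,d,Z_i,s,ε) : Z ⊆ ⋃ Z_i}`. -/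
noncomputable def packOuter (T : X → X) (Z : Set X) (s : ℝ) (ε : ℝ) : ℝ≥0∞ :=
  ⨅ (Zs : ℕ → Set X) (_ : Z ⊆ ⋃ i, Zs i), ∑' i, packCP T (Zs i) s ε

/-- Packing `ε`-entropy of the subset `Z`: critical value of `s ↦ 𝒫(T,d,Z,s,ε)`. -/
noncomputable def packEnt (T : X → X) (Z : Set X) (ε : ℝ) : ℝ≥0∞ :=
  sInf {a : ℝ≥0∞ | ∃ s : ℝ, 0 ≤ s ∧ a = ENNReal.ofReal s ∧ packOuter T Z s ε = 0}

/-- Packing topological entropy of a subset: `lim_{ε → 0} h_top^P(T,Z,d,ε)`. -/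
noncomputable def packEntTotal (T : X → X) (Z : Set X) : ℝ≥0∞ :=
  ⨆ (ε : ℝ) (_ : 0 < ε), packEnt T Z ε

/-- Katok-type Bowen pre-measure `M^δ(T,d,μ,s,N,ε)` for a measure `μ`. -/
noncomputable def bowenPreMeas [MeasurableSpace X] (T : X → X) (μ : Measure X) (s : ℝ)
    (N : ℕ) (ε δ : ℝ) : ℝ≥0∞ :=
  ⨅ (I : Set (X × ℕ)) (_ : I.Countable ∧ (∀ p ∈ I, N ≤ p.2) ∧
      1 - ENNReal.ofReal δ < μ (⋃ p ∈ I, bowenBall T p.2 p.1 ε)), weightSum s I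

/-- The critical value `M^δ(T,d,μ,ε)`. -/
noncomputable def bowenEntMeasδ [MeasurableSpace X] (T : X → X) (μ : Measure X)
    (ε δ : ℝ) : ℝ≥0∞ :=
  sInf {a : ℝ≥0∞ | ∃ s : ℝ, 0 ≤ s ∧ a = ENNReal.ofReal s ∧
    (⨆ N, bowenPreMeas T μ s N ε δ) = 0}

/-- `M_μ(T,d,ε) = lim_{δ → 0} M^δ(T,d,μ,ε)`. -/
noncomputable def bowenEntMeas [MeasurableSpace X] (T : X → X) (μ : Measure X) (ε : ℝ) : ℝ≥0∞ :=
  ⨆ δ ∈ Set.Ioo (0 : ℝ) 1, bowenEntMeasδ T μ ε δ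

/-- `𝒫^δ(T,d,μ,s,ε) = inf {∑_i P(T,d,Z_i,s,ε) : μ(⋃ Z_i) > 1 - δ}`. -/
noncomputable def packOuterMeas [MeasurableSpace X] (T : X → X) (μ : Measure X) (s : ℝ)
    (ε δ : ℝ) : ℝ≥0∞ :=
  ⨅ (Zs : ℕ → Set X) (_ : 1 - ENNReal.ofReal δ < μ (⋃ i, Zs i)), ∑' i, packCP T (Zs i) s ε

/-- The critical value `𝒫^δ(T,d,μ,ε)`. -/
noncomputable def packEntMeasδ [MeasurableSpace X] (T : X → X) (μ : Measure X)
    (ε δ : ℝ) : ℝ≥0∞ :=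
  sInf {a : ℝ≥0∞ | ∃ s : ℝ, 0 ≤ s ∧ a = ENNReal.ofReal s ∧ packOuterMeas T μ s ε δ = 0}

/-- `𝒫_μ(T,d,ε) = lim_{δ → 0} 𝒫^δ(T,d,μ,ε)`. -/
noncomputable def packEntMeas [MeasurableSpace X] (T : X → X) (μ : Measure X) (ε : ℝ) : ℝ≥0∞ :=
  ⨆ δ ∈ Set.Ioo (0 : ℝ) 1, packEntMeasδ T μ ε δ

/-- The `n`-th empirical measure `(1/n) ∑_{j=0}^{n-1} δ_{T^j x}`. -/
noncomputable def empMeas [MeasurableSpace X] (T : X → X) (x : X) (n : ℕ) : Measure X :=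
  (n : ℝ≥0∞)⁻¹ • ∑ j ∈ Finset.range n, Measure.dirac (T^[j] x)

set_option linter.unusedSectionVars false in
lemma empMeas_finite [MeasurableSpace X] (T : X → X) (x : X) (n : ℕ) :
    IsFiniteMeasure (empMeas T x n) := by
  refine ⟨?_⟩
  have h : (∑ j ∈ Finset.range n, Measure.dirac (T^[j] x)) Set.univ = n := by
    rw [Measure.finset_sum_apply]
    simp
  rw [empMeas, Measure.smul_apply, smul_eq_mul, h]
  rcases eq_or_ne (n : ℝ≥0∞) 0 with h0 | h0
  · simp [h0]
  · rw [ENNReal.inv_mul_cancel h0 (by simp)]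
    exact ENNReal.one_lt_top

/-- The `n`-th empirical measure as a finite measure. -/
noncomputable def empFM [MeasurableSpace X] (T : X → X) (x : X) (n : ℕ) : FiniteMeasure X :=
  ⟨empMeas T x n, empMeas_finite T x n⟩

/-- The set of generic points of `μ`: points whose empirical measures converge weakly to `μ`. -/
def genPts [MeasurableSpace X] [OpensMeasurableSpace X] (T : X → X) (μ : Measure X) [IsFiniteMeasure μ] : Set X :=
  {x | Tendsto (fun n => empFM T x n) atTop (𝓝 (⟨μ, ‹_›⟩ : FiniteMeasure X))}

/-- `X_{n,F}`: points whose `n`-th empirical measure lies in `F`. -/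
def XnF [MeasurableSpace X] [OpensMeasurableSpace X] (T : X → X) (F : Set (FiniteMeasure X)) (n : ℕ) : Set X :=
  {x | empFM T x n ∈ F}

/-- Pfister–Sullivan `ε`-entropy of `μ`. -/
noncomputable def psEnt [MeasurableSpace X] [OpensMeasurableSpace X] (T : X → X) (μ : Measure X) [IsFiniteMeasure μ]
    (ε : ℝ) : ℝ≥0∞ :=
  ⨅ (F : Set (FiniteMeasure X)) (_ : F ∈ @nhds (FiniteMeasure X) _ ⟨μ, ‹_›⟩),
    limsup (fun n => ENNReal.ofReal (Real.log (sepNum T n ε (XnF T F n)) / n)) atTop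

/-- `limsup_{ε → 0⁺} f(ε)/log(1/ε)`. -/
noncomputable def mmUpper (f : ℝ → ℝ≥0∞) : ℝ≥0∞ :=
  limsup (fun ε : ℝ => f ε / ENNReal.ofReal (Real.log (1 / ε))) (𝓝[>] (0 : ℝ))

/-- `liminf_{ε → 0⁺} f(ε)/log(1/ε)`. -/
noncomputable def mmLower (f : ℝ → ℝ≥0∞) : ℝ≥0∞ :=
  liminf (fun ε : ℝ => f ε / ENNReal.ofReal (Real.log (1 / ε))) (𝓝[>] (0 : ℝ))

/-- Bowen upper metric mean dimension of a subset. -/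
noncomputable def mdimBUpper (T : X → X) (Z : Set X) : ℝ≥0∞ :=
  mmUpper (fun ε => bowenEnt T Z ε)

/-- Packing upper metric mean dimension of a subset. -/
noncomputable def mdimPUpper (T : X → X) (Z : Set X) : ℝ≥0∞ :=
  mmUpper (fun ε => packEnt T Z ε)

/-- Packing lower metric mean dimension of a subset. -/
noncomputable def mdimPLower (T : X → X) (Z : Set X) : ℝ≥0∞ :=
  mmLower (fun ε => packEnt T Z ε)

section BKAux
set_option linter.unusedSectionVars false
set_option linter.unusedVariables false
attribute [local instance] Classical.propDecidable

variable {X : Type*} [MetricSpace X]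

noncomputable def pcell (P : Finset (Set X)) (x : X) : Set X :=
  if h : ∃ A, A ∈ P ∧ x ∈ A then h.choose else ∅

noncomputable def pcellN (T : X → X) (P : Finset (Set X)) : ℕ → X → Set X
  | 0, _ => Set.univ
  | n+1, x => pcell P x ∩ T ⁻¹' (pcellN T P n (T x))

variable [MeasurableSpace X] {T : X → X} {P : Finset (Set X)}

lemma exists_pcell (hP : IsMeasPartition P) (x : X) : ∃ A, A ∈ P ∧ x ∈ A := by
  have hx : x ∈ ⋃ A ∈ P, A := hP.2.2 ▸ Set.mem_univ x
  simpa using hx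

lemma pcell_mem (hP : IsMeasPartition P) (x : X) : pcell P x ∈ P := by
  rw [pcell, dif_pos (exists_pcell hP x)]
  exact (exists_pcell hP x).choose_spec.1

lemma mem_pcell (hP : IsMeasPartition P) (x : X) : x ∈ pcell P x := by
  rw [pcell, dif_pos (exists_pcell hP x)]
  exact (exists_pcell hP x).choose_spec.2

lemma pcell_eq (hP : IsMeasPartition P) {A : Set X} (hA : A ∈ P) {x : X} (hx : x ∈ A) :
    pcell P x = A := by
  by_contra hne
  exact Set.disjoint_left.1 (hP.2.1 _ (pcell_mem hP x) _ hA hne) (mem_pcell hP x) hx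

lemma mem_pcellN_iff {n : ℕ} {x y : X} :
    y ∈ pcellN T P n x ↔ ∀ j < n, T^[j] y ∈ pcell P (T^[j] x) := by
  induction n generalizing x y with
  | zero => simp [pcellN]
  | succ n ih =>
    constructor
    · rintro ⟨h0, h1⟩ j hj
      match j with
      | 0 => simpa using h0
      | Nat.succ i =>
        rw [Function.iterate_succ_apply, Function.iterate_succ_apply]
        exact ih.1 h1 i (by omega)
    · intro h
      refine ⟨by simpa using h 0 (Nat.succ_pos n), ih.2 fun j hj => ?_⟩
      have := h (j+1) (by omega)
      rwa [Function.iterate_succ_apply, Function.iterate_succ_apply] at this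

lemma mem_pcellN_self (hP : IsMeasPartition P) (n : ℕ) (x : X) : x ∈ pcellN T P n x :=
  mem_pcellN_iff.2 fun j _ => mem_pcell hP _

lemma pcellN_eq_iInter (n : ℕ) (x : X) :
    pcellN T P n x = ⋂ j : Fin n, T^[(j : ℕ)] ⁻¹' pcell P (T^[(j : ℕ)] x) := by
  ext y
  simp only [mem_pcellN_iff, Set.mem_iInter, Set.mem_preimage]
  exact ⟨fun h j => h j j.2, fun h j hj => h ⟨j, hj⟩⟩

lemma pcellN_mem_joinPart (hP : IsMeasPartition P) (n : ℕ) (x : X) :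
    pcellN T P n x ∈ joinPart T P n := by
  rw [joinPart]
  refine Finset.mem_image.2 ⟨fun j => pcell P (T^[(j : ℕ)] x), ?_, (pcellN_eq_iInter n x).symm⟩
  exact Fintype.mem_piFinset.2 fun j => pcell_mem hP _

lemma measurableSet_of_mem_joinPart (hP : IsMeasPartition P) (hT : Measurable T) {n : ℕ}
    {D : Set X} (hD : D ∈ joinPart T P n) : MeasurableSet D := by
  rw [joinPart] at hD
  rcases Finset.mem_image.1 hD with ⟨f, hf, rfl⟩
  exact MeasurableSet.iInter fun j =>
    (hP.1 _ (Fintype.mem_piFinset.1 hf j)).preimage (hT.iterate _)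

lemma measurableSet_pcellN (hP : IsMeasPartition P) (hT : Measurable T) (n : ℕ) (x : X) :
    MeasurableSet (pcellN T P n x) :=
  measurableSet_of_mem_joinPart hP hT (pcellN_mem_joinPart hP n x)

lemma iterate_mem_pcellN {n k l : ℕ} (h : k + l ≤ n) {x y : X} (hy : y ∈ pcellN T P n x) :
    T^[k] y ∈ pcellN T P l (T^[k] x) := by
  rw [mem_pcellN_iff] at hy ⊢
  intro j hj
  rw [← Function.iterate_add_apply, ← Function.iterate_add_apply]
  exact hy (j + k) (by omega)

lemma pcellN_mono {m n : ℕ} (h : m ≤ n) (x : X) : pcellN T P n x ⊆ pcellN T P m x := by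
  intro y hy
  rw [mem_pcellN_iff] at hy ⊢
  exact fun j hj => hy j (by omega)

lemma pcellN_eq_of_mem (hP : IsMeasPartition P) {n : ℕ} {x y : X} (hy : y ∈ pcellN T P n x) :
    pcellN T P n y = pcellN T P n x := by
  have hpc : ∀ j < n, pcell P (T^[j] y) = pcell P (T^[j] x) := fun j hj =>
    pcell_eq hP (pcell_mem hP _) (mem_pcellN_iff.1 hy j hj)
  ext z
  rw [mem_pcellN_iff, mem_pcellN_iff]
  exact ⟨fun h j hj => hpc j hj ▸ h j hj, fun h j hj => (hpc j hj).symm ▸ h j hj⟩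

lemma pcellN_eq_of_mem_join (hP : IsMeasPartition P) {n : ℕ} {D : Set X}
    (hD : D ∈ joinPart T P n) {x : X} (hx : x ∈ D) : pcellN T P n x = D := by
  rw [joinPart] at hD
  rcases Finset.mem_image.1 hD with ⟨f, hf, rfl⟩
  have hxj : ∀ j : Fin n, T^[(j : ℕ)] x ∈ f j := by
    intro j
    exact Set.mem_iInter.1 hx j
  rw [pcellN_eq_iInter]
  exact Set.iInter_congr fun j => by
    rw [pcell_eq hP (Fintype.mem_piFinset.1 hf j) (hxj j)]

lemma joinPart_disjoint (hP : IsMeasPartition P) {n : ℕ} {D D' : Set X}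
    (hD : D ∈ joinPart T P n) (hD' : D' ∈ joinPart T P n) (hne : D ≠ D') : Disjoint D D' := by
  rw [joinPart] at hD hD'
  rcases Finset.mem_image.1 hD with ⟨f, hf, rfl⟩
  rcases Finset.mem_image.1 hD' with ⟨f', hf', rfl⟩
  have hff : f ≠ f' := by rintro rfl; exact hne rfl
  rcases Function.ne_iff.1 hff with ⟨j, hj⟩
  have : Disjoint (T^[(j : ℕ)] ⁻¹' f j) (T^[(j : ℕ)] ⁻¹' f' j) :=
    Disjoint.preimage _ (hP.2.1 _ (Fintype.mem_piFinset.1 hf j) _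
      (Fintype.mem_piFinset.1 hf' j) hj)
  exact this.mono (Set.iInter_subset _ j) (Set.iInter_subset _ j)

lemma joinPart_cover (hP : IsMeasPartition P) (n : ℕ) :
    ⋃ D ∈ joinPart T P n, D = Set.univ := by
  refine Set.eq_univ_of_forall fun x => ?_
  exact Set.mem_biUnion (pcellN_mem_joinPart hP n x) (mem_pcellN_self hP n x)

lemma isMeasPartition_joinPart (hP : IsMeasPartition P) (hT : Measurable T) (n : ℕ) :
    IsMeasPartition (joinPart T P n) :=
  ⟨fun _ hD => measurableSet_of_mem_joinPart hP hT hD,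
   fun _ hD _ hD' => joinPart_disjoint hP hD hD', joinPart_cover hP n⟩

lemma IsMeasPartition.sum_measure_inter {Q : Finset (Set X)} (hQ : IsMeasPartition Q)
    (μ : MeasureTheory.Measure X) {S : Set X} (hS : MeasurableSet S) :
    ∑ A ∈ Q, μ (A ∩ S) = μ S := by
  classical
  have hcov : ⋃ A ∈ Q, (A ∩ S) = S := by
    rw [← Set.iUnion₂_inter, hQ.2.2, Set.univ_inter]
  have := MeasureTheory.measure_biUnion_finset (μ := μ)
    (s := Q) (f := fun A => A ∩ S) ?_ ?_
  · rw [hcov] at this; exact this.symm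
  · intro A hA B hB hne
    exact ((hQ.2.1 A hA B hB hne).mono Set.inter_subset_left Set.inter_subset_left)
  · exact fun A hA => (hQ.1 A hA).inter hS

end BKAux

section BKAux2
set_option linter.unusedSectionVars false
set_option linter.unusedVariables false
attribute [local instance] Classical.propDecidable

variable {X : Type*} [MetricSpace X] [MeasurableSpace X] {T : X → X} {P : Finset (Set X)}
  {μ : MeasureTheory.Measure X}

noncomputable def cellVal (G : X → ℝ) (D : Set X) : ℝ :=
  if h : D.Nonempty then G h.choose else 0

lemma cellconst_eq_sum (hP : IsMeasPartition P) {n : ℕ} {G : X → ℝ}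
    (hG : ∀ x y, y ∈ pcellN T P n x → G y = G x) :
    G = fun x => ∑ D ∈ joinPart T P n, Set.indicator D (fun _ => cellVal G D) x := by
  funext x
  have hx := mem_pcellN_self hP n x (T := T)
  have hmem := pcellN_mem_joinPart hP n x (T := T)
  rw [Finset.sum_eq_single (pcellN T P n x)]
  · have hne : (pcellN T P n x).Nonempty := ⟨x, hx⟩
    rw [Set.indicator_of_mem hx, cellVal, dif_pos hne]
    exact (hG x hne.choose hne.choose_spec).symm
  · intro D hD hne
    exact Set.indicator_of_notMem
      (fun hxD => hne ((pcellN_eq_of_mem_join hP hD hxD).symm)) _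
  · intro h; exact absurd hmem h

lemma cellconst_measurable (hP : IsMeasPartition P) (hT : Measurable T) {n : ℕ} {G : X → ℝ}
    (hG : ∀ x y, y ∈ pcellN T P n x → G y = G x) : Measurable G := by
  rw [cellconst_eq_sum hP hG]
  exact Finset.measurable_sum _ fun D hD =>
    measurable_const.indicator (measurableSet_of_mem_joinPart hP hT hD)

lemma cellconst_integrable [MeasureTheory.IsFiniteMeasure μ] (hP : IsMeasPartition P)
    (hT : Measurable T) {n : ℕ} {G : X → ℝ}
    (hG : ∀ x y, y ∈ pcellN T P n x → G y = G x) : MeasureTheory.Integrable G μ := by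
  rw [cellconst_eq_sum hP hG]
  exact MeasureTheory.integrable_finset_sum _ fun D hD =>
    (MeasureTheory.integrable_const _).indicator (measurableSet_of_mem_joinPart hP hT hD)

lemma setIntegral_eq_of_eqOn_const {S : Set X} (hS : MeasurableSet S) {G : X → ℝ} {c : ℝ}
    (h : ∀ y ∈ S, G y = c) : ∫ x in S, G x ∂μ = c * (μ S).toReal := by
  rw [MeasureTheory.setIntegral_congr_fun hS h, MeasureTheory.setIntegral_const, smul_eq_mul,
    mul_comm]
  rfl

lemma integral_eq_sum_partition {Q : Finset (Set X)} (hQ : IsMeasPartition Q) {G : X → ℝ}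
    (hGi : MeasureTheory.Integrable G μ) :
    ∫ x, G x ∂μ = ∑ A ∈ Q, ∫ x in A, G x ∂μ := by
  rw [← MeasureTheory.setIntegral_univ (f := G), ← hQ.2.2]
  exact MeasureTheory.integral_biUnion_finset Q hQ.1
    (fun A hA B hB hne => hQ.2.1 A hA B hB hne) (fun A hA => hGi.integrableOn)

end BKAux2

section BKAux3
set_option linter.unusedSectionVars false
set_option linter.unusedVariables false
attribute [local instance] Classical.propDecidable

open MeasureTheory

variable {X : Type*} [MetricSpace X] [MeasurableSpace X] {T : X → X} {P : Finset (Set X)}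
  {μ : Measure X}

noncomputable def ucell (T : X → X) (P : Finset (Set X)) (μ : Measure X) (n : ℕ) (x : X) : ℝ :=
  (μ (pcellN T P n x)).toReal

noncomputable def fmfun (T : X → X) (P : Finset (Set X)) (μ : Measure X) (m : ℕ) (x : X) : ℝ :=
  if 0 < ucell T P μ (m+1) x then
    Real.log (ucell T P μ m (T x)) - Real.log (ucell T P μ (m+1) x) else 0

noncomputable def sigm (T : X → X) (P : Finset (Set X)) (μ : Measure X) (m : ℕ) :
    ℕ → X → ℝ
  | 0, x => ucell T P μ m x
  | l+1, x => Real.exp (-(fmfun T P μ m x)) * sigm T P μ m l (T x)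

variable [IsProbabilityMeasure μ]

lemma ucell_nonneg (n : ℕ) (x : X) : 0 ≤ ucell T P μ n x := ENNReal.toReal_nonneg

lemma ucell_le_one (n : ℕ) (x : X) : ucell T P μ n x ≤ 1 := by
  have h := prob_le_one (μ := μ) (s := pcellN T P n x)
  simpa [ucell] using ENNReal.toReal_mono ENNReal.one_ne_top h

lemma ucell_cellconst (hP : IsMeasPartition P) (n : ℕ) :
    ∀ x y : X, y ∈ pcellN T P n x → ucell T P μ n y = ucell T P μ n x := fun x y hy => by
  rw [ucell, ucell, pcellN_eq_of_mem hP hy]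

lemma ucell_measurable (hP : IsMeasPartition P) (hT : Measurable T) (n : ℕ) :
    Measurable (ucell T P μ n) :=
  cellconst_measurable hP hT (ucell_cellconst hP n)

lemma ucell_integrable (hP : IsMeasPartition P) (hT : Measurable T) (n : ℕ) :
    Integrable (ucell T P μ n) μ :=
  cellconst_integrable hP hT (ucell_cellconst hP n)

lemma ucell_anti {m n : ℕ} (h : m ≤ n) (x : X) : ucell T P μ n x ≤ ucell T P μ m x :=
  ENNReal.toReal_mono (measure_ne_top μ _) (measure_mono (pcellN_mono h x))

lemma ucell_iterate_le (hP : IsMeasPartition P) (hT : Measurable T)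
    (hpre : MeasurePreserving T μ μ) {k l n : ℕ} (h : k + l ≤ n) (x : X) :
    ucell T P μ n x ≤ ucell T P μ l (T^[k] x) := by
  have hsub : pcellN T P n x ⊆ T^[k] ⁻¹' pcellN T P l (T^[k] x) :=
    fun y hy => iterate_mem_pcellN h hy
  have hmeq : μ (T^[k] ⁻¹' pcellN T P l (T^[k] x)) = μ (pcellN T P l (T^[k] x)) :=
    (hpre.iterate k).measure_preimage (measurableSet_pcellN hP hT l _).nullMeasurableSet
  exact ENNReal.toReal_mono (measure_ne_top μ _) (hmeq ▸ measure_mono hsub)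

lemma ucell_pos_of_le (hP : IsMeasPartition P) (hT : Measurable T)
    (hpre : MeasurePreserving T μ μ) {k l n : ℕ} (h : k + l ≤ n) {x : X}
    (hx : 0 < ucell T P μ n x) : 0 < ucell T P μ l (T^[k] x) :=
  lt_of_lt_of_le hx (ucell_iterate_le hP hT hpre h x)

lemma fm_nonneg (hP : IsMeasPartition P) (hT : Measurable T)
    (hpre : MeasurePreserving T μ μ) (m : ℕ) (x : X) : 0 ≤ fmfun T P μ m x := by
  rw [fmfun]
  split_ifs with h
  · have h1 : ucell T P μ (m+1) x ≤ ucell T P μ m (T x) := by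
      have := ucell_iterate_le hP hT hpre (k := 1) (l := m) (n := m+1) (by omega) x
      simpa using this
    have h2 : 0 < ucell T P μ m (T x) := lt_of_lt_of_le h h1
    have := (Real.log_le_log_iff h h2).2 h1
    linarith
  · exact le_refl 0

lemma fm_cellconst (hP : IsMeasPartition P) (m : ℕ) :
    ∀ x y : X, y ∈ pcellN T P (m+1) x → fmfun T P μ m y = fmfun T P μ m x := by
  intro x y hy
  have h1 : ucell T P μ (m+1) y = ucell T P μ (m+1) x := ucell_cellconst hP (m+1) x y hy
  have h2 : ucell T P μ m (T y) = ucell T P μ m (T x) := by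
    have hTy : T^[1] y ∈ pcellN T P m (T^[1] x) := iterate_mem_pcellN (by omega) hy
    simpa using ucell_cellconst hP m (T x) (T y) (by simpa using hTy)
  rw [fmfun, fmfun, h1, h2]

lemma fm_measurable (hP : IsMeasPartition P) (hT : Measurable T) (m : ℕ) :
    Measurable (fmfun T P μ m) :=
  cellconst_measurable hP hT (fm_cellconst hP m)

lemma fm_integrable (hP : IsMeasPartition P) (hT : Measurable T) (m : ℕ) :
    Integrable (fmfun T P μ m) μ :=
  cellconst_integrable hP hT (fm_cellconst hP m)

lemma exp_neg_fm (hP : IsMeasPartition P) (hT : Measurable T)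
    (hpre : MeasurePreserving T μ μ) {m : ℕ} {x : X} (h : 0 < ucell T P μ (m+1) x) :
    Real.exp (-(fmfun T P μ m x)) = ucell T P μ (m+1) x / ucell T P μ m (T x) := by
  have h2 : 0 < ucell T P μ m (T x) := by
    have := ucell_iterate_le hP hT hpre (k := 1) (l := m) (n := m+1) (by omega) x
    have := lt_of_lt_of_le h (by simpa using this)
    exact this
  rw [fmfun, if_pos h, neg_sub, Real.exp_sub, Real.exp_log h, Real.exp_log h2]

lemma sigm_nonneg (m l : ℕ) (x : X) : 0 ≤ sigm T P μ m l x := by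
  induction l generalizing x with
  | zero => exact ucell_nonneg m x
  | succ l ih => exact mul_nonneg (Real.exp_nonneg _) (ih (T x))

lemma sigm_cellconst (hP : IsMeasPartition P) (m : ℕ) :
    ∀ l : ℕ, ∀ x y : X, y ∈ pcellN T P (m + l) x → sigm T P μ m l y = sigm T P μ m l x := by
  intro l
  induction l with
  | zero => exact fun x y hy => ucell_cellconst hP m x y hy
  | succ l ih =>
    intro x y hy
    have h1 : fmfun T P μ m y = fmfun T P μ m x :=
      fm_cellconst hP m x y (pcellN_mono (by omega) x hy)
    have h2 : sigm T P μ m l (T y) = sigm T P μ m l (T x) := by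
      have hTy : T^[1] y ∈ pcellN T P (m + l) (T^[1] x) := iterate_mem_pcellN (by omega) hy
      exact ih (T x) (T y) (by simpa using hTy)
    show Real.exp (-(fmfun T P μ m y)) * sigm T P μ m l (T y) = _
    rw [h1, h2]; rfl

lemma sigm_measurable (hP : IsMeasPartition P) (hT : Measurable T) (m l : ℕ) :
    Measurable (sigm T P μ m l) :=
  cellconst_measurable hP hT (sigm_cellconst hP m l)

lemma sigm_prod (m : ℕ) : ∀ (l : ℕ) (x : X),
    sigm T P μ m l x =
      Real.exp (-(∑ k ∈ Finset.range l, fmfun T P μ m (T^[k] x))) * ucell T P μ m (T^[l] x) := by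
  intro l
  induction l with
  | zero => intro x; simp [sigm]
  | succ l ih =>
    intro x
    show Real.exp (-(fmfun T P μ m x)) * sigm T P μ m l (T x) = _
    have hs : ∑ k ∈ Finset.range (l+1), fmfun T P μ m (T^[k] x)
        = fmfun T P μ m x + ∑ k ∈ Finset.range l, fmfun T P μ m (T^[k] (T x)) := by
      rw [Finset.sum_range_succ' (fun k => fmfun T P μ m (T^[k] x)) l]
      simp only [Function.iterate_succ_apply, Function.iterate_zero_apply]
      ring
    rw [ih (T x), ← mul_assoc, ← Real.exp_add, hs, neg_add, ← Function.iterate_succ_apply]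

end BKAux3

section BKAux4
set_option linter.unusedSectionVars false
set_option linter.unusedVariables false
set_option maxHeartbeats 1000000
attribute [local instance] Classical.propDecidable

open MeasureTheory

variable {X : Type*} [MetricSpace X] [MeasurableSpace X] {T : X → X} {P : Finset (Set X)}
  {μ : Measure X} [IsProbabilityMeasure μ]

lemma phi_cellconst (hP : IsMeasPartition P) (m l : ℕ) :
    ∀ x y : X, y ∈ pcellN T P (m + l) x →
      sigm T P μ m l y / ucell T P μ (m + l) y = sigm T P μ m l x / ucell T P μ (m + l) x :=
  fun x y hy => by
    rw [sigm_cellconst hP m l x y hy, ucell_cellconst hP (m + l) x y hy]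

lemma phi_integrable (hP : IsMeasPartition P) (hT : Measurable T) (m l : ℕ) :
    Integrable (fun x => sigm T P μ m l x / ucell T P μ (m + l) x) μ :=
  cellconst_integrable hP hT (phi_cellconst hP m l)

lemma phi_measurable (hP : IsMeasPartition P) (hT : Measurable T) (m l : ℕ) :
    Measurable (fun x => sigm T P μ m l x / ucell T P μ (m + l) x) :=
  cellconst_measurable hP hT (phi_cellconst hP m l)

lemma integral_phi_le_one (hP : IsMeasPartition P) (hT : Measurable T)
    (hpre : MeasurePreserving T μ μ) (m : ℕ) :
    ∀ l : ℕ, ∫ x, sigm T P μ m l x / ucell T P μ (m + l) x ∂μ ≤ 1 := by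
  intro l
  induction l with
  | zero =>
    have hle : ∀ x : X, sigm T P μ m 0 x / ucell T P μ (m + 0) x ≤ 1 := by
      intro x
      show ucell T P μ m x / ucell T P μ m x ≤ 1
      rcases eq_or_ne (ucell T P μ m x) 0 with h | h
      · simp [h]
      · rw [div_self h]
    calc ∫ x, sigm T P μ m 0 x / ucell T P μ (m + 0) x ∂μ
        ≤ ∫ _x, (1 : ℝ) ∂μ :=
          integral_mono (phi_integrable hP hT m 0) (integrable_const 1) hle
      _ = 1 := by simp
  | succ l ih =>
    -- the comparison function W = Φ l ∘ T
    set Φ : X → ℝ := fun x => sigm T P μ m l x / ucell T P μ (m + l) x with hΦdef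
    have hΦint : Integrable Φ μ := phi_integrable hP hT m l
    have hΦmeas : Measurable Φ := phi_measurable hP hT m l
    have hWcc : ∀ x y : X, y ∈ pcellN T P (m + l + 1) x → Φ (T y) = Φ (T x) := by
      intro x y hy
      have hTy : T^[1] y ∈ pcellN T P (m + l) (T^[1] x) := iterate_mem_pcellN (by omega) hy
      exact phi_cellconst hP m l (T x) (T y) (by simpa using hTy)
    have hWint : Integrable (fun x => Φ (T x)) μ := cellconst_integrable hP hT hWcc
    have hWeq : ∫ x, Φ (T x) ∂μ = ∫ x, Φ x ∂μ := by
      conv_rhs => rw [← hpre.map_eq]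
      exact (integral_map hT.aemeasurable
        (hpre.map_eq.symm ▸ hΦmeas.aestronglyMeasurable)).symm
    have hmain : ∫ x, sigm T P μ m (l+1) x / ucell T P μ (m + (l+1)) x ∂μ
        ≤ ∫ x, Φ (T x) ∂μ := by
      have hJmeas : ∀ D ∈ joinPart T P (m + l), MeasurableSet (T ⁻¹' D) :=
        fun D hD => (measurableSet_of_mem_joinPart hP hT hD).preimage hT
      have hcov : ⋃ D ∈ joinPart T P (m + l), T ⁻¹' D = Set.univ := by
        rw [← Set.preimage_iUnion₂, joinPart_cover hP, Set.preimage_univ]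
      have hdisj : (↑(joinPart T P (m + l)) : Set (Set X)).Pairwise
          (Function.onFun Disjoint fun D => T ⁻¹' D) := fun D hD D' hD' hne =>
        Disjoint.preimage _ (joinPart_disjoint hP hD hD' hne)
      have hsplitL : ∫ x, sigm T P μ m (l+1) x / ucell T P μ (m + (l+1)) x ∂μ
          = ∑ D ∈ joinPart T P (m + l),
              ∫ x in T ⁻¹' D, sigm T P μ m (l+1) x / ucell T P μ (m + (l+1)) x ∂μ := by
        rw [← setIntegral_univ (μ := μ)
          (f := fun x => sigm T P μ m (l+1) x / ucell T P μ (m + (l+1)) x), ← hcov]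
        exact integral_biUnion_finset _ hJmeas hdisj
          (fun D hD => (phi_integrable hP hT m (l+1)).integrableOn)
      have hsplitR : ∫ x, Φ (T x) ∂μ
          = ∑ D ∈ joinPart T P (m + l), ∫ x in T ⁻¹' D, Φ (T x) ∂μ := by
        rw [← setIntegral_univ (μ := μ) (f := fun x => Φ (T x)), ← hcov]
        exact integral_biUnion_finset _ hJmeas hdisj (fun D hD => hWint.integrableOn)
      rw [hsplitL, hsplitR]
      refine Finset.sum_le_sum fun D' hD' => ?_
      rcases eq_or_ne (μ (T ⁻¹' D')) 0 with hD0 | hD0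
      · rw [Measure.restrict_eq_zero.2 hD0]
        simp
      -- positive-measure fiber
      obtain ⟨x₀, hx₀⟩ : (T ⁻¹' D').Nonempty := nonempty_of_measure_ne_zero hD0
      have hD'meas : MeasurableSet D' := measurableSet_of_mem_joinPart hP hT hD'
      have hDm : μ (T ⁻¹' D') = μ D' := hpre.measure_preimage hD'meas.nullMeasurableSet
      have hμD'0 : μ D' ≠ 0 := fun h => hD0 (by rw [hDm, h])
      have hμD'pos : 0 < (μ D').toReal :=
        ENNReal.toReal_pos hμD'0 (measure_ne_top μ _)
      have hcellD' : pcellN T P (m + l) (T x₀) = D' := pcellN_eq_of_mem_join hP hD' hx₀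
      set E' : Set X := pcellN T P m (T x₀) with hE'def
      set p : ℝ := sigm T P μ m l (T x₀) with hpdef
      have hp0 : 0 ≤ p := sigm_nonneg m l (T x₀)
      have hE'mem : E' ∈ joinPart T P m := pcellN_mem_joinPart hP m (T x₀)
      have hE'meas : MeasurableSet E' := measurableSet_of_mem_joinPart hP hT hE'mem
      have hD'subE : D' ⊆ E' := by
        rw [← hcellD']; exact pcellN_mono (by omega) (T x₀)
      have hμE'pos : 0 < (μ E').toReal :=
        lt_of_lt_of_le hμD'pos
          (ENNReal.toReal_mono (measure_ne_top μ _) (measure_mono hD'subE))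
      -- RHS over the fiber equals p
      have hRHS : ∫ x in T ⁻¹' D', Φ (T x) ∂μ = p := by
        have hconst : ∀ y ∈ T ⁻¹' D', Φ (T y) = p / (μ D').toReal := by
          intro y hy
          have h1 : pcellN T P (m + l) (T y) = D' := pcellN_eq_of_mem_join hP hD' hy
          have h2 : sigm T P μ m l (T y) = p := by
            rw [hpdef]
            exact sigm_cellconst hP m l (T x₀) (T y) (hcellD' ▸ h1 ▸ mem_pcellN_self hP _ _)
          show sigm T P μ m l (T y) / ucell T P μ (m + l) (T y) = p / (μ D').toReal
          rw [h2, ucell, h1]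
        rw [setIntegral_eq_of_eqOn_const (hD'meas.preimage hT) hconst, hDm]
        field_simp
      rw [hRHS]
      -- LHS: split the fiber along P
      have hcov2 : ⋃ A ∈ P, (A ∩ T ⁻¹' D') = T ⁻¹' D' := by
        rw [← Set.iUnion₂_inter, hP.2.2, Set.univ_inter]
      have hsplit2 : ∫ x in T ⁻¹' D', sigm T P μ m (l+1) x / ucell T P μ (m + (l+1)) x ∂μ
          = ∑ A ∈ P, ∫ x in A ∩ T ⁻¹' D',
              sigm T P μ m (l+1) x / ucell T P μ (m + (l+1)) x ∂μ := by
        conv_lhs => rw [← hcov2]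
        exact integral_biUnion_finset _ (fun A hA => (hP.1 A hA).inter (hD'meas.preimage hT))
          (fun A hA B hB hne => (hP.2.1 A hA B hB hne).mono Set.inter_subset_left
            Set.inter_subset_left)
          (fun A hA => (phi_integrable hP hT m (l+1)).integrableOn)
      rw [hsplit2]
      have hbound : ∀ A ∈ P, ∫ x in A ∩ T ⁻¹' D',
          sigm T P μ m (l+1) x / ucell T P μ (m + (l+1)) x ∂μ
          ≤ p * ((μ (A ∩ T ⁻¹' E')).toReal / (μ E').toReal) := by
        intro A hA
        rcases eq_or_ne (μ (A ∩ T ⁻¹' D')) 0 with hA0 | hA0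
        · rw [Measure.restrict_eq_zero.2 hA0]
          simp only [integral_zero_measure]
          positivity
        obtain ⟨x₁, hx₁⟩ : (A ∩ T ⁻¹' D').Nonempty := nonempty_of_measure_ne_zero hA0
        have hμApos : 0 < (μ (A ∩ T ⁻¹' D')).toReal :=
          ENNReal.toReal_pos hA0 (measure_ne_top μ _)
        have hTx₁ : T x₁ ∈ D' := hx₁.2
        have hcellTx₁ : pcellN T P (m + l) (T x₁) = D' := pcellN_eq_of_mem_join hP hD' hTx₁
        have hcellE : pcellN T P m (T x₁) = E' :=
          pcellN_eq_of_mem_join hP hE'mem (hD'subE hTx₁)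
        have hpcellx₁ : pcell P x₁ = A := pcell_eq hP hA hx₁.1
        have hcell1 : pcellN T P (m + l + 1) x₁ = A ∩ T ⁻¹' D' := by
          show pcell P x₁ ∩ T ⁻¹' pcellN T P (m + l) (T x₁) = A ∩ T ⁻¹' D'
          rw [hpcellx₁, hcellTx₁]
        have hcellm1 : pcellN T P (m + 1) x₁ = A ∩ T ⁻¹' E' := by
          show pcell P x₁ ∩ T ⁻¹' pcellN T P m (T x₁) = A ∩ T ⁻¹' E'
          rw [hpcellx₁, hcellE]
        have hupos : 0 < ucell T P μ (m + 1) x₁ := by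
          refine lt_of_lt_of_le ?_ (ucell_anti (m := m+1) (n := m+l+1) (by omega) x₁)
          show (0:ℝ) < ucell T P μ (m + l + 1) x₁
          rw [ucell, hcell1]; exact hμApos
        have hconst : ∀ y ∈ A ∩ T ⁻¹' D',
            sigm T P μ m (l+1) y / ucell T P μ (m + (l+1)) y
              = Real.exp (-(fmfun T P μ m x₁)) * p / (μ (A ∩ T ⁻¹' D')).toReal := by
          intro y hy
          have hymem : y ∈ pcellN T P (m + l + 1) x₁ := hcell1 ▸ hy
          have h1 : fmfun T P μ m y = fmfun T P μ m x₁ :=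
            fm_cellconst hP m x₁ y (pcellN_mono (by omega) x₁ hymem)
          have h2 : sigm T P μ m l (T y) = p := by
            rw [hpdef]
            refine sigm_cellconst hP m l (T x₀) (T y) ?_
            rw [hcellD']
            exact (pcellN_eq_of_mem_join hP hD' (hcell1 ▸ hymem : y ∈ A ∩ T ⁻¹' D').2) ▸
              mem_pcellN_self hP _ _
          have h3 : ucell T P μ (m + (l+1)) y = (μ (A ∩ T ⁻¹' D')).toReal := by
            show ucell T P μ (m + l + 1) y = _
            rw [ucell, pcellN_eq_of_mem hP hymem, hcell1]
          show sigm T P μ m (l+1) y / ucell T P μ (m + (l+1)) y = _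
          have : sigm T P μ m (l+1) y = Real.exp (-(fmfun T P μ m y)) * sigm T P μ m l (T y) :=
            rfl
          rw [this, h1, h2, h3]
        rw [setIntegral_eq_of_eqOn_const ((hP.1 A hA).inter (hD'meas.preimage hT)) hconst]
        have hexp : Real.exp (-(fmfun T P μ m x₁))
            = (μ (A ∩ T ⁻¹' E')).toReal / (μ E').toReal := by
          rw [exp_neg_fm hP hT hpre hupos]
          congr 1
          · rw [ucell, hcellm1]
          · rw [ucell, hcellE]
        rw [hexp]
        rw [div_mul_cancel₀ _ (ne_of_gt hμApos)]
        ring_nf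
        exact le_of_eq rfl
      calc ∑ A ∈ P, ∫ x in A ∩ T ⁻¹' D',
            sigm T P μ m (l+1) x / ucell T P μ (m + (l+1)) x ∂μ
          ≤ ∑ A ∈ P, p * ((μ (A ∩ T ⁻¹' E')).toReal / (μ E').toReal) :=
            Finset.sum_le_sum hbound
        _ = p := by
            rw [← Finset.mul_sum, ← Finset.sum_div]
            have hsum : ∑ A ∈ P, (μ (A ∩ T ⁻¹' E')).toReal = (μ (T ⁻¹' E')).toReal := by
              rw [← ENNReal.toReal_sum (fun A hA => measure_ne_top μ _)]
              rw [hP.sum_measure_inter μ (hE'meas.preimage hT)]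
            rw [hsum, hpre.measure_preimage hE'meas.nullMeasurableSet,
              div_self (ne_of_gt hμE'pos), mul_one]
    calc ∫ x, sigm T P μ m (l+1) x / ucell T P μ (m + (l+1)) x ∂μ
        ≤ ∫ x, Φ (T x) ∂μ := hmain
      _ = ∫ x, Φ x ∂μ := hWeq
      _ ≤ 1 := ih

end BKAux4

section BKAux5
set_option linter.unusedSectionVars false
set_option linter.unusedVariables false
set_option maxHeartbeats 1000000
attribute [local instance] Classical.propDecidable

open MeasureTheory Filter

variable {X : Type*} [MetricSpace X] [MeasurableSpace X] {T : X → X} {P : Finset (Set X)}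
  {μ : Measure X} [IsProbabilityMeasure μ]

lemma mu_ucell_zero (hP : IsMeasPartition P) (n : ℕ) :
    μ {x | μ (pcellN T P n x) = 0} = 0 := by
  classical
  have hsub : {x | μ (pcellN T P n x) = 0} ⊆
      ⋃ D ∈ (joinPart T P n).filter (fun D => μ D = 0), D := by
    intro x hx
    exact Set.mem_biUnion (Finset.mem_filter.2 ⟨pcellN_mem_joinPart hP n x, hx⟩)
      (mem_pcellN_self hP n x)
  refine le_antisymm (le_trans (measure_mono hsub) ?_) zero_le
  refine le_trans (measure_biUnion_finset_le _ _) ?_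
  have : ∀ D ∈ (joinPart T P n).filter (fun D => μ D = 0), μ D = 0 :=
    fun D hD => (Finset.mem_filter.1 hD).2
  rw [Finset.sum_congr rfl this]
  simp

lemma mu_bad_le (hP : IsMeasPartition P) (hT : Measurable T)
    (hpre : MeasurePreserving T μ μ) (m l : ℕ) {δ : ℝ} (hδ : 0 < δ) :
    μ {x | ucell T P μ (m+l) x < Real.exp (-(δ*((m+l : ℕ) : ℝ))) * sigm T P μ m l x}
      ≤ ENNReal.ofReal (Real.exp (-(δ*((m+l : ℕ) : ℝ)))) := by
  set n := m + l with hn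
  have hsub : {x | ucell T P μ n x < Real.exp (-(δ*n)) * sigm T P μ m l x}
      ⊆ {x | Real.exp (δ*n) ≤ sigm T P μ m l x / ucell T P μ n x}
        ∪ {x | μ (pcellN T P n x) = 0} := by
    intro x hx
    rcases eq_or_ne (μ (pcellN T P n x)) 0 with h0 | h0
    · exact Or.inr h0
    · left
      have hupos : 0 < ucell T P μ n x := ENNReal.toReal_pos h0 (measure_ne_top μ _)
      have hx' : ucell T P μ n x < Real.exp (-(δ*(n:ℝ))) * sigm T P μ m l x := hx
      rw [Set.mem_setOf_eq, le_div_iff₀ hupos]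
      have hexp1 : Real.exp (δ*(n:ℝ)) * Real.exp (-(δ*(n:ℝ))) = 1 := by
        rw [← Real.exp_add]; simp
      have hkey : Real.exp (δ*(n:ℝ)) * ucell T P μ n x < sigm T P μ m l x := by
        calc Real.exp (δ*(n:ℝ)) * ucell T P μ n x
            < Real.exp (δ*(n:ℝ)) * (Real.exp (-(δ*(n:ℝ))) * sigm T P μ m l x) :=
              mul_lt_mul_of_pos_left hx' (Real.exp_pos _)
          _ = sigm T P μ m l x := by rw [← mul_assoc, hexp1, one_mul]
      linarith
  refine le_trans (measure_mono hsub) ?_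
  refine le_trans (measure_union_le _ _) ?_
  rw [mu_ucell_zero hP n, add_zero]
  -- Markov
  have hΦint : Integrable (fun x => sigm T P μ m l x / ucell T P μ n x) μ :=
    phi_integrable hP hT m l
  have hΦ0 : 0 ≤ᵐ[μ] fun x => sigm T P μ m l x / ucell T P μ n x :=
    Filter.Eventually.of_forall fun x => div_nonneg (sigm_nonneg m l x) (ucell_nonneg n x)
  have hmark := mul_meas_ge_le_integral_of_nonneg hΦ0 hΦint (Real.exp (δ*n))
  have hle1 := integral_phi_le_one hP hT hpre m l
  have h2 : (μ {x | Real.exp (δ*n) ≤ sigm T P μ m l x / ucell T P μ n x}).toReal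
      ≤ Real.exp (-(δ*n)) := by
    rw [Real.exp_neg]
    rw [inv_eq_one_div, le_div_iff₀ (Real.exp_pos _)]
    calc (μ {x | Real.exp (δ*n) ≤ sigm T P μ m l x / ucell T P μ n x}).toReal
          * Real.exp (δ*n)
        = Real.exp (δ*n) * (μ {x | Real.exp (δ*n) ≤ sigm T P μ m l x / ucell T P μ n x}).toReal := by
          ring
      _ ≤ ∫ x, sigm T P μ m l x / ucell T P μ n x ∂μ := hmark
      _ ≤ 1 := hle1
  exact (ENNReal.le_ofReal_iff_toReal_le (measure_ne_top μ _) (Real.exp_nonneg _)).2 h2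

lemma ae_eventually_good (hP : IsMeasPartition P) (hT : Measurable T)
    (hpre : MeasurePreserving T μ μ) (m : ℕ) {δ : ℝ} (hδ : 0 < δ) :
    ∀ᵐ x ∂μ, ∀ᶠ l in atTop,
      Real.exp (-(δ*((m+l : ℕ) : ℝ))) * sigm T P μ m l x ≤ ucell T P μ (m+l) x := by
  have hBC := MeasureTheory.ae_eventually_notMem (μ := μ)
    (s := fun l => {x | ucell T P μ (m+l) x < Real.exp (-(δ*((m+l : ℕ) : ℝ))) * sigm T P μ m l x}) ?_
  · filter_upwards [hBC] with x hx
    filter_upwards [hx] with l hl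
    exact not_lt.1 hl
  · -- summability
    have hbound : ∀ l : ℕ,
        μ {x | ucell T P μ (m+l) x < Real.exp (-(δ*((m+l : ℕ) : ℝ))) * sigm T P μ m l x}
          ≤ ENNReal.ofReal (Real.exp (-δ)) ^ l := by
      intro l
      refine le_trans (mu_bad_le hP hT hpre m l hδ) ?_
      rw [← ENNReal.ofReal_pow (Real.exp_nonneg _)]
      refine ENNReal.ofReal_le_ofReal ?_
      rw [← Real.exp_nat_mul]
      refine Real.exp_le_exp.2 ?_
      push_cast
      nlinarith [hδ.le, Nat.cast_nonneg (α := ℝ) m, Nat.cast_nonneg (α := ℝ) l]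
    refine ne_top_of_le_ne_top ?_ (ENNReal.tsum_le_tsum hbound)
    rw [ENNReal.tsum_geometric]
    refine ENNReal.inv_ne_top.2 ?_
    have hlt : ENNReal.ofReal (Real.exp (-δ)) < 1 := by
      rw [← ENNReal.ofReal_one]
      exact (ENNReal.ofReal_lt_ofReal_iff one_pos).2
        (Real.exp_lt_one_iff.2 (by linarith))
    simp only [ne_eq, tsub_eq_zero_iff_le]
    exact not_le.2 hlt

end BKAux5

section BKErgodic
set_option linter.unusedSectionVars false
set_option linter.unusedVariables false
set_option maxHeartbeats 1000000

open MeasureTheory Filter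
open scoped NNReal

variable {X : Type*} [MeasurableSpace X] {T : X → X} {μ : Measure X} [IsProbabilityMeasure μ]

lemma bk_integrable_of_bounded {f : X → ℝ} {C : ℝ} (hf : Measurable f)
    (h : ∀ x, |f x| ≤ C) : Integrable f μ :=
  (integrable_const C).mono' hf.aestronglyMeasurable
    (Filter.Eventually.of_forall fun x => by simpa using h x)

lemma bk_limsup_le_limsup {u v : ℕ → ℝ≥0∞}
    (h : ∀ ε : ℝ≥0, 0 < ε → ∀ᶠ n in atTop, u n ≤ v n + ε) :
    limsup u atTop ≤ limsup v atTop := by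
  refine ENNReal.le_of_forall_pos_le_add fun ε hε hv => ?_
  have hε2 : (0:ℝ≥0) < ε / 2 := by positivity
  have h1 : limsup v atTop < limsup v atTop + (ε/2 : ℝ≥0) :=
    ENNReal.lt_add_right hv.ne (by exact_mod_cast hε2.ne')
  have h2 : ∀ᶠ n in atTop, v n < limsup v atTop + (ε/2 : ℝ≥0) :=
    Filter.eventually_lt_of_limsup_lt h1
  have h3 := h (ε/2) hε2
  have h4 : ∀ᶠ n in atTop, u n ≤ limsup v atTop + ε := by
    filter_upwards [h2, h3] with n hn2 hn3
    calc u n ≤ v n + (ε/2 : ℝ≥0) := hn3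
      _ ≤ (limsup v atTop + (ε/2 : ℝ≥0)) + (ε/2 : ℝ≥0) := add_le_add_left hn2.le _
      _ = limsup v atTop + ε := by
          rw [add_assoc, ← ENNReal.coe_add, add_halves]
  exact Filter.limsup_le_of_le (by isBoundedDefault) h4

noncomputable def birkMax (T : X → X) (φ : X → ℝ) : ℕ → X → ℝ
  | 0, _ => 0
  | N+1, x => max 0 (φ x + birkMax T φ N (T x))

lemma birkMax_nonneg (φ : X → ℝ) (N : ℕ) (x : X) : 0 ≤ birkMax T φ N x := by
  cases N with
  | zero => exact le_refl 0
  | succ N => exact le_max_left _ _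

lemma birkMax_measurable (hT : Measurable T) {φ : X → ℝ} (hφ : Measurable φ) (N : ℕ) :
    Measurable (birkMax T φ N) := by
  induction N with
  | zero => exact measurable_const
  | succ N ih => exact measurable_const.max (hφ.add (ih.comp hT))

lemma birkMax_le (φ : X → ℝ) {C : ℝ} (hC : ∀ x, φ x ≤ C) (hC0 : 0 ≤ C) (N : ℕ) (x : X) :
    birkMax T φ N x ≤ N * C := by
  induction N generalizing x with
  | zero => simp [birkMax]
  | succ N ih =>
    refine max_le (by positivity) ?_
    calc φ x + birkMax T φ N (T x) ≤ C + N * C := add_le_add (hC x) (ih (T x))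
      _ = (↑(N+1) : ℝ) * C := by push_cast; ring

lemma birkMax_mono (φ : X → ℝ) (N : ℕ) (x : X) : birkMax T φ N x ≤ birkMax T φ (N+1) x := by
  induction N generalizing x with
  | zero => exact birkMax_nonneg φ 1 x
  | succ N ih =>
    exact max_le (le_max_left _ _) (le_max_of_le_right (add_le_add_right (ih (T x)) _))

lemma birkSum_le_birkMax (φ : X → ℝ) : ∀ N k : ℕ, k ≤ N → ∀ x : X,
    (∑ j ∈ Finset.range k, φ (T^[j] x)) ≤ birkMax T φ N x := by
  intro N
  induction N with
  | zero =>
    intro k hk x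
    interval_cases k
    simp [birkMax]
  | succ N ih =>
    intro k hk x
    match k with
    | 0 => simpa using birkMax_nonneg φ (N+1) x
    | k+1 =>
      have hrec : (∑ j ∈ Finset.range (k+1), φ (T^[j] x))
          = φ x + ∑ j ∈ Finset.range k, φ (T^[j] (T x)) := by
        rw [Finset.sum_range_succ' (fun j => φ (T^[j] x)) k]
        simp only [Function.iterate_succ_apply, Function.iterate_zero_apply]
        ring
      rw [hrec]
      exact le_trans (add_le_add_right (ih k (by omega) (T x)) _) (le_max_right _ _)

lemma ergodic_limsup_avg_le (hμ : Ergodic T μ) {f : X → ℝ} {M : ℝ}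
    (hf : Measurable f) (h0 : ∀ x, 0 ≤ f x) (hM : ∀ x, f x ≤ M) (hM0 : 0 ≤ M) :
    ∀ᵐ x ∂μ,
      limsup (fun n => ENNReal.ofReal ((∑ k ∈ Finset.range n, f (T^[k] x)) / n)) atTop
        ≤ ENNReal.ofReal (∫ x, f x ∂μ) := by
  classical
  have hTm : Measurable T := hμ.toMeasurePreserving.measurable
  have hpre : MeasurePreserving T μ μ := hμ.toMeasurePreserving
  set S : ℕ → X → ℝ := fun n x => ∑ k ∈ Finset.range n, f (T^[k] x) with hSdef
  have hSmeas : ∀ n, Measurable (S n) := fun n =>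
    Finset.measurable_sum _ fun k _ => hf.comp (hTm.iterate k)
  have hS0 : ∀ n x, 0 ≤ S n x := fun n x => Finset.sum_nonneg fun k _ => h0 _
  have hSle : ∀ n x, S n x ≤ n * M := fun n x => by
    calc S n x ≤ ∑ _k ∈ Finset.range n, M := Finset.sum_le_sum fun k _ => hM _
      _ = n * M := by simp [Finset.sum_const, Finset.card_range, nsmul_eq_mul]
  have hSsucc : ∀ n x, S (n+1) x = f x + S n (T x) := by
    intro n x
    show (∑ k ∈ Finset.range (n+1), f (T^[k] x)) = f x + ∑ k ∈ Finset.range n, f (T^[k] (T x))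
    rw [Finset.sum_range_succ' (fun j => f (T^[j] x)) n]
    simp only [Function.iterate_succ_apply, Function.iterate_zero_apply]
    ring
  set g : X → ℝ≥0∞ := fun x => limsup (fun n => ENNReal.ofReal (S n x / n)) atTop with hgdef
  have hgmeas : Measurable g :=
    Measurable.limsup fun n => ENNReal.measurable_ofReal.comp ((hSmeas n).div_const _)
  have hMdiv : ∀ ε : ℝ≥0, 0 < ε → ∀ᶠ n : ℕ in atTop, ENNReal.ofReal (M / n) ≤ (ε : ℝ≥0∞) := by
    intro ε hε
    have htend : Tendsto (fun n : ℕ => M / (n:ℝ)) atTop (nhds 0) :=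
      tendsto_const_div_atTop_nhds_zero_nat M
    have hev : ∀ᶠ n : ℕ in atTop, M / (n:ℝ) ≤ (ε : ℝ) := by
      have hε' : (0:ℝ) < ε := by exact_mod_cast hε
      filter_upwards [htend.eventually (eventually_le_nhds (by linarith : (0:ℝ) < ε))] with n hn
      exact hn
    filter_upwards [hev] with n hn
    calc ENNReal.ofReal (M / n) ≤ ENNReal.ofReal (ε : ℝ) := ENNReal.ofReal_le_ofReal hn
      _ = (ε : ℝ≥0∞) := ENNReal.ofReal_coe_nnreal
  have hginv : ∀ x, g (T x) = g x := by
    intro x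
    have heq : limsup (fun n => ENNReal.ofReal (S (n+1) x / ((n+1 : ℕ) : ℝ))) atTop = g x :=
      Filter.limsup_nat_add (fun n => ENNReal.ofReal (S n x / n)) 1
    apply le_antisymm
    · rw [← heq]
      refine bk_limsup_le_limsup fun ε hε => ?_
      filter_upwards [hMdiv ε hε, eventually_ge_atTop 1] with n hn hn1
      have hn0 : (0:ℝ) < n := by exact_mod_cast hn1
      have hn0' : (0:ℝ) < n + 1 := by linarith
      have hcast : ((n+1 : ℕ) : ℝ) = (n : ℝ) + 1 := by push_cast; ring
      have hreal : S n (T x) / n ≤ S (n+1) x / ((n+1 : ℕ) : ℝ) + M / n := by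
        rw [hcast]
        have h1 : S n (T x) ≤ S (n+1) x := by rw [hSsucc n x]; linarith [h0 x]
        have h2 : S n (T x) / n ≤ S (n+1) x / n := by gcongr
        have ha1 : S (n+1) x ≤ ((n:ℝ)+1) * M := by
          have := hSle (n+1) x; push_cast at this; linarith
        have expand : S (n+1) x / (n+1) + M / n - S (n+1) x / n
            = (M*((n:ℝ)+1) - S (n+1) x) / (((n:ℝ)+1)*n) := by
          field_simp
          ring
        have hpos : 0 ≤ (M*((n:ℝ)+1) - S (n+1) x) / (((n:ℝ)+1)*n) :=
          div_nonneg (by linarith) (by positivity)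
        linarith
      calc ENNReal.ofReal (S n (T x) / n)
          ≤ ENNReal.ofReal (S (n+1) x / ((n+1 : ℕ) : ℝ) + M / n) :=
            ENNReal.ofReal_le_ofReal hreal
        _ ≤ ENNReal.ofReal (S (n+1) x / ((n+1 : ℕ) : ℝ)) + ENNReal.ofReal (M / n) :=
            ENNReal.ofReal_add_le
        _ ≤ ENNReal.ofReal (S (n+1) x / ((n+1 : ℕ) : ℝ)) + ε := add_le_add_right hn _
    · rw [← heq]
      refine bk_limsup_le_limsup fun ε hε => ?_
      filter_upwards [hMdiv ε hε, eventually_ge_atTop 1] with n hn hn1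
      have hn0 : (0:ℝ) < n := by exact_mod_cast hn1
      have hn0' : (0:ℝ) < n + 1 := by linarith
      have hcast : ((n+1 : ℕ) : ℝ) = (n : ℝ) + 1 := by push_cast; ring
      have hreal : S (n+1) x / ((n+1 : ℕ) : ℝ) ≤ S n (T x) / n + M / n := by
        rw [hcast]
        have h1 : S (n+1) x / (n+1) ≤ S n (T x) / (n+1) + M / (n+1) := by
          rw [hSsucc n x, add_div]
          have h1a : f x / ((n:ℝ)+1) ≤ M / ((n:ℝ)+1) := by gcongr; exact hM x
          linarith
        have h2 : S n (T x) / ((n:ℝ)+1) ≤ S n (T x) / n :=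
          div_le_div_of_nonneg_left (hS0 n (T x)) hn0 (by linarith)
        have h3 : M / ((n:ℝ)+1) ≤ M / n :=
          div_le_div_of_nonneg_left hM0 hn0 (by linarith)
        linarith
      calc ENNReal.ofReal (S (n+1) x / ((n+1 : ℕ) : ℝ))
          ≤ ENNReal.ofReal (S n (T x) / n + M / n) := ENNReal.ofReal_le_ofReal hreal
        _ ≤ ENNReal.ofReal (S n (T x) / n) + ENNReal.ofReal (M / n) := ENNReal.ofReal_add_le
        _ ≤ ENNReal.ofReal (S n (T x) / n) + ε := add_le_add_right hn _
  obtain ⟨c, hc⟩ := hμ.ae_eq_const_of_ae_eq_comp₀ hgmeas.nullMeasurable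
    (Filter.Eventually.of_forall fun x => hginv x)
  have hint : Integrable f μ := bk_integrable_of_bounded hf
    (fun x => abs_le.2 ⟨by linarith [h0 x], hM x⟩)
  have hintf0 : 0 ≤ ∫ x, f x ∂μ := integral_nonneg h0
  have hmain : c ≤ ENNReal.ofReal (∫ x, f x ∂μ) := by
    by_contra hgt
    push_neg at hgt
    obtain ⟨α, hα1, hα2⟩ : ∃ α : ℝ, (∫ x, f x ∂μ) < α ∧ ENNReal.ofReal α < c := by
      rcases eq_or_ne c ⊤ with hctop | hctop
      · exact ⟨(∫ x, f x ∂μ) + 1, by linarith, by rw [hctop]; exact ENNReal.ofReal_lt_top⟩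
      · have h1 : (∫ x, f x ∂μ) < c.toReal :=
          (ENNReal.ofReal_lt_iff_lt_toReal hintf0 hctop).1 hgt
        refine ⟨((∫ x, f x ∂μ) + c.toReal)/2, by linarith, ?_⟩
        rw [ENNReal.ofReal_lt_iff_lt_toReal (by linarith) hctop]
        linarith
    have hα0 : 0 < α := lt_of_le_of_lt hintf0 hα1
    set φ : X → ℝ := fun x => f x - α with hφdef
    have hφmeas : Measurable φ := hf.sub measurable_const
    have hφint : Integrable φ μ := hint.sub (integrable_const α)
    have hφle : ∀ x, φ x ≤ M := fun x => by
      have := hM x; simp only [hφdef]; linarith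
    set E : ℕ → Set X := fun N => {x | 0 < φ x + birkMax T φ N (T x)} with hEdef
    have hEmeas : ∀ N, MeasurableSet (E N) := fun N =>
      measurableSet_lt measurable_const
        (hφmeas.add ((birkMax_measurable hTm hφmeas N).comp hTm))
    have hEmono : Monotone E := monotone_nat_of_le_succ fun N x hx =>
      lt_of_lt_of_le hx (add_le_add_right (birkMax_mono φ N (T x)) _)
    have hbMbound : ∀ (N : ℕ) (x : X), |birkMax T φ N x| ≤ (N:ℝ) * M := by
      intro N x
      rw [abs_le]
      constructor
      · have h1 := birkMax_nonneg (T := T) φ N x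
        have h2 : (0:ℝ) ≤ (N:ℝ) * M := mul_nonneg (Nat.cast_nonneg N) hM0
        linarith
      · exact birkMax_le (T := T) φ hφle hM0 N x
    have hbMint : ∀ N, Integrable (birkMax T φ N) μ := fun N =>
      bk_integrable_of_bounded (birkMax_measurable hTm hφmeas N) (hbMbound N)
    have hkey : ∀ N, 0 ≤ ∫ x in E N, φ x ∂μ := by
      intro N
      have hInt1 : Integrable (birkMax T φ (N+1)) μ := hbMint (N+1)
      have hIntT : Integrable (fun x => birkMax T φ N (T x)) μ :=
        (hpre.integrable_comp (birkMax_measurable hTm hφmeas N).aestronglyMeasurable).2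
          (hbMint N)
      have heq1 : ∫ x in E N, φ x ∂μ
          = ∫ x in E N, (birkMax T φ (N+1) x - birkMax T φ N (T x)) ∂μ := by
        refine setIntegral_congr_fun (hEmeas N) fun x hx => ?_
        have hmax : birkMax T φ (N+1) x = φ x + birkMax T φ N (T x) :=
          max_eq_right (le_of_lt hx)
        rw [hmax]; ring
      have heq2 : ∫ x in E N, birkMax T φ (N+1) x ∂μ = ∫ x, birkMax T φ (N+1) x ∂μ := by
        rw [← integral_add_compl (hEmeas N) hInt1]
        have hz : ∫ x in (E N)ᶜ, birkMax T φ (N+1) x ∂μ = 0 := by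
          have hzz : ∀ x ∈ (E N)ᶜ, birkMax T φ (N+1) x = (fun _ => (0:ℝ)) x :=
            fun x hx => max_eq_left (not_lt.1 hx)
          rw [setIntegral_congr_fun (hEmeas N).compl hzz]
          simp
        rw [hz, add_zero]
      have h3 : ∫ x in E N, birkMax T φ N (T x) ∂μ ≤ ∫ x, birkMax T φ N (T x) ∂μ :=
        setIntegral_le_integral hIntT
          (Filter.Eventually.of_forall fun x => birkMax_nonneg φ N (T x))
      have h4 : ∫ x, birkMax T φ N (T x) ∂μ = ∫ x, birkMax T φ N x ∂μ := by
        conv_rhs => rw [← hpre.map_eq]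
        exact (integral_map hTm.aemeasurable
          (hpre.map_eq.symm ▸ (birkMax_measurable hTm hφmeas N).aestronglyMeasurable)).symm
      have h5 : ∫ x, birkMax T φ N x ∂μ ≤ ∫ x, birkMax T φ (N+1) x ∂μ :=
        integral_mono (hbMint N) (hbMint (N+1)) fun x => birkMax_mono φ N x
      have h6 : ∫ x in E N, (birkMax T φ (N+1) x - birkMax T φ N (T x)) ∂μ
          = ∫ x in E N, birkMax T φ (N+1) x ∂μ - ∫ x in E N, birkMax T φ N (T x) ∂μ :=
        integral_sub hInt1.integrableOn hIntT.integrableOn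
      rw [heq1, h6, heq2]
      linarith
    have hae : ∀ᵐ x ∂μ, x ∈ ⋃ N, E N := by
      filter_upwards [hc] with x hx
      have hgt2 : ENNReal.ofReal α < g x := by rw [hx]; exact hα2
      have hfreq : ∃ᶠ n in atTop, ENNReal.ofReal α < ENNReal.ofReal (S n x / n) :=
        Filter.frequently_lt_of_lt_limsup (by isBoundedDefault) hgt2
      obtain ⟨n, hn1, hn2⟩ := (hfreq.and_eventually (eventually_ge_atTop 1)).exists
      have hαA : α < S n x / n :=
        (ENNReal.ofReal_lt_ofReal_iff_of_nonneg hα0.le).1 hn1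
      have hn0 : (0:ℝ) < n := by exact_mod_cast hn2
      have hS' : α * n < S n x := (lt_div_iff₀ hn0).1 hαA
      have hφS : 0 < ∑ j ∈ Finset.range n, φ (T^[j] x) := by
        have hsum : ∑ j ∈ Finset.range n, φ (T^[j] x) = S n x - n * α := by
          simp only [hφdef, Finset.sum_sub_distrib, Finset.sum_const, Finset.card_range,
            nsmul_eq_mul]
          rfl
        rw [hsum]; linarith
      obtain ⟨k, rfl⟩ : ∃ k, n = k + 1 := ⟨n - 1, by omega⟩
      refine Set.mem_iUnion.2 ⟨k, ?_⟩
      show 0 < φ x + birkMax T φ k (T x)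
      have hsplit : ∑ j ∈ Finset.range (k+1), φ (T^[j] x)
          = φ x + ∑ j ∈ Finset.range k, φ (T^[j] (T x)) := by
        rw [Finset.sum_range_succ' (fun j => φ (T^[j] x)) k]
        simp only [Function.iterate_succ_apply, Function.iterate_zero_apply]
        ring
      have hle := birkSum_le_birkMax (T := T) φ k k le_rfl (T x)
      rw [hsplit] at hφS
      linarith
    set U : Set X := ⋃ N, E N with hUdef
    have hUmeas : MeasurableSet U := MeasurableSet.iUnion hEmeas
    have hUc : μ Uᶜ = 0 := by
      have h := ae_iff.1 hae
      simpa [Set.compl_def] using h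
    have htend := tendsto_setIntegral_of_monotone hEmeas hEmono hφint.integrableOn
    have hU0 : 0 ≤ ∫ x in U, φ x ∂μ := ge_of_tendsto' htend hkey
    have hXint : ∫ x, φ x ∂μ = ∫ x in U, φ x ∂μ := by
      rw [← integral_add_compl hUmeas hφint]
      have hzero : (∫ x in Uᶜ, φ x ∂μ) = 0 := by
        rw [Measure.restrict_eq_zero.2 hUc]
        exact integral_zero_measure _
      rw [hzero, add_zero]
    have hφint2 : ∫ x, φ x ∂μ = (∫ x, f x ∂μ) - α := by
      simp only [hφdef]
      rw [integral_sub hint (integrable_const α), integral_const]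
      simp
    have hfinal : 0 ≤ (∫ x, f x ∂μ) - α := by
      rw [← hφint2, hXint]; exact hU0
    linarith
  filter_upwards [hc] with x hx
  show g x ≤ ENNReal.ofReal (∫ x, f x ∂μ)
  rw [hx]
  exact hmain

end BKErgodic

section BKAux7
set_option linter.unusedSectionVars false
set_option linter.unusedVariables false
set_option maxHeartbeats 1000000
attribute [local instance] Classical.propDecidable

open MeasureTheory Filter

variable {X : Type*} [MetricSpace X] [MeasurableSpace X] {T : X → X} {P : Finset (Set X)}
  {μ : Measure X} [IsProbabilityMeasure μ]

lemma joinPart_zero : joinPart T P 0 = {Set.univ} := by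
  rw [joinPart]
  ext S
  simp only [Finset.mem_image, Finset.mem_singleton]
  constructor
  · rintro ⟨f, hf, rfl⟩
    exact Set.iInter_of_empty _
  · rintro rfl
    exact ⟨fun j => j.elim0, Fintype.mem_piFinset.2 fun j => j.elim0,
      (Set.iInter_of_empty _)⟩

lemma partEntropy_nonneg (Q : Finset (Set X)) : 0 ≤ partEntropy μ Q :=
  Finset.sum_nonneg fun A _ => Real.negMulLog_nonneg ENNReal.toReal_nonneg
    (by simpa using ENNReal.toReal_mono ENNReal.one_ne_top (prob_le_one (μ := μ) (s := A)))

lemma sum_measure_toReal_joinPart (hP : IsMeasPartition P) (hT : Measurable T) (n : ℕ) :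
    ∑ D ∈ joinPart T P n, (μ D).toReal = 1 := by
  have h := (isMeasPartition_joinPart hP hT n).sum_measure_inter μ MeasurableSet.univ
  simp only [Set.inter_univ] at h
  rw [← ENNReal.toReal_sum (fun D _ => measure_ne_top μ _), h, measure_univ,
    ENNReal.toReal_one]

lemma partEntropy_le_log {Q : Finset (Set X)} (hsum : ∑ A ∈ Q, (μ A).toReal = 1)
    (hcard : 1 ≤ Q.card) : partEntropy μ Q ≤ Real.log Q.card := by
  set N : ℝ := (Q.card : ℝ) with hN
  have hN1 : (1:ℝ) ≤ N := by rw [hN]; exact_mod_cast hcard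
  have hN0 : (0:ℝ) < N := by linarith
  have key : ∀ A ∈ Q, Real.negMulLog ((μ A).toReal)
      ≤ (μ A).toReal * Real.log N + (1/N - (μ A).toReal) := by
    intro A _
    set p : ℝ := (μ A).toReal with hp
    have hp0 : 0 ≤ p := ENNReal.toReal_nonneg
    rcases eq_or_lt_of_le hp0 with hp0' | hp0'
    · rw [← hp0']
      simp [Real.negMulLog]
      positivity
    · have hpN : 0 < p * N := by positivity
      have hlog : Real.log ((p*N)⁻¹) ≤ (p*N)⁻¹ - 1 :=
        Real.log_le_sub_one_of_pos (by positivity)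
      have hmul := mul_le_mul_of_nonneg_left hlog hp0
      have hinv : p * (p*N)⁻¹ = 1/N := by field_simp
      have hloginv : Real.log ((p*N)⁻¹) = -(Real.log p + Real.log N) := by
        rw [Real.log_inv, Real.log_mul (ne_of_gt hp0') (ne_of_gt hN0)]
      rw [hloginv] at hmul
      have : p * (-(Real.log p + Real.log N)) ≤ 1/N - p := by
        calc p * (-(Real.log p + Real.log N)) ≤ p * ((p*N)⁻¹ - 1) := hmul
          _ = p * (p*N)⁻¹ - p := by ring
          _ = 1/N - p := by rw [hinv]
      have hexp : Real.negMulLog p = p * (-(Real.log p + Real.log N)) + p * Real.log N := by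
        rw [Real.negMulLog]; ring
      rw [hexp]
      linarith
  calc partEntropy μ Q ≤ ∑ A ∈ Q, ((μ A).toReal * Real.log N + (1/N - (μ A).toReal)) :=
        Finset.sum_le_sum key
    _ = (∑ A ∈ Q, (μ A).toReal) * Real.log N
        + ((Q.card : ℝ) * (1/N) - ∑ A ∈ Q, (μ A).toReal) := by
        rw [Finset.sum_add_distrib, Finset.sum_sub_distrib, ← Finset.sum_mul,
          Finset.sum_const, nsmul_eq_mul]
    _ = Real.log N := by
        rw [hsum, ← hN]
        field_simp
        ring
  
lemma card_joinPart_le (n : ℕ) : (joinPart T P n).card ≤ P.card ^ n := by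
  rw [joinPart]
  refine le_trans (Finset.card_image_le) ?_
  rw [Fintype.card_piFinset]
  simp

lemma exists_min_pos_joinPart (n : ℕ) :
    ∃ θ : ℝ, 0 < θ ∧ θ ≤ 1 ∧ ∀ D ∈ joinPart T P n, μ D ≠ 0 → θ ≤ (μ D).toReal := by
  classical
  set s := (joinPart T P n).filter (fun D => μ D ≠ 0) with hs
  rcases Finset.eq_empty_or_nonempty s with hse | hsne
  · refine ⟨1, one_pos, le_refl 1, fun D hD hD0 => absurd ?_ (Finset.notMem_empty D)⟩
    rw [← hse]
    exact Finset.mem_filter.2 ⟨hD, hD0⟩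
  · have himne : (s.image fun D => (μ D).toReal).Nonempty := hsne.image _
    set θ := (s.image fun D => (μ D).toReal).min' himne with hθ
    obtain ⟨D₀, hD₀s, hD₀⟩ := Finset.mem_image.1 ((s.image fun D => (μ D).toReal).min'_mem himne)
    have hθpos : 0 < θ := by
      rw [hθ, ← hD₀]
      exact ENNReal.toReal_pos (Finset.mem_filter.1 hD₀s).2 (measure_ne_top μ _)
    have hθle : ∀ D ∈ joinPart T P n, μ D ≠ 0 → θ ≤ (μ D).toReal := by
      intro D hD hD0
      exact Finset.min'_le _ _ (Finset.mem_image.2 ⟨D, Finset.mem_filter.2 ⟨hD, hD0⟩, rfl⟩)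
    refine ⟨θ, hθpos, ?_, hθle⟩
    rw [hθ, ← hD₀]
    simpa using ENNReal.toReal_mono ENNReal.one_ne_top (prob_le_one (μ := μ) (s := D₀))

lemma fm_bound (hP : IsMeasPartition P) (hT : Measurable T)
    (hpre : MeasurePreserving T μ μ) (m : ℕ) :
    ∃ C : ℝ, 0 ≤ C ∧ ∀ x, fmfun T P μ m x ≤ C := by
  obtain ⟨θ, hθ0, hθ1, hθle⟩ := exists_min_pos_joinPart (T := T) (P := P) (μ := μ) (m+1)
  refine ⟨-Real.log θ, by simpa using Real.log_nonpos (le_of_lt hθ0) hθ1, fun x => ?_⟩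
  rw [fmfun]
  split_ifs with h
  · have hu1 : ucell T P μ (m+1) x ≤ 1 := ucell_le_one (m+1) x
    have hmem := pcellN_mem_joinPart hP (m+1) x (T := T)
    have hne : μ (pcellN T P (m+1) x) ≠ 0 := by
      intro h0
      rw [ucell, h0] at h
      simp at h
    have hθu : θ ≤ ucell T P μ (m+1) x := hθle _ hmem hne
    have h1 : Real.log (ucell T P μ m (T x)) ≤ 0 :=
      Real.log_nonpos (ucell_nonneg m (T x)) (ucell_le_one m (T x))
    have h2 : Real.log θ ≤ Real.log (ucell T P μ (m+1) x) :=
      Real.log_le_log hθ0 hθu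
    linarith
  · simpa using Real.log_nonpos (le_of_lt hθ0) hθ1

noncomputable def tailCell (T : X → X) (P : Finset (Set X)) (m : ℕ) (D : Set X) : Set X :=
  if h : D.Nonempty then pcellN T P m (T h.choose) else ∅

lemma tailCell_eq (hP : IsMeasPartition P) {m : ℕ} {D : Set X}
    (hD : D ∈ joinPart T P (m+1)) {x : X} (hx : x ∈ D) :
    pcellN T P m (T x) = tailCell T P m D := by
  have hne : D.Nonempty := ⟨x, hx⟩
  rw [tailCell, dif_pos hne]
  have hxD : pcellN T P (m+1) x = D := pcellN_eq_of_mem_join hP hD hx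
  have hch : hne.choose ∈ pcellN T P (m+1) x := hxD ▸ hne.choose_spec
  have : T^[1] hne.choose ∈ pcellN T P m (T^[1] x) := iterate_mem_pcellN (by omega) hch
  exact (pcellN_eq_of_mem hP (by simpa using this)).symm

lemma tailCell_mem (hP : IsMeasPartition P) {m : ℕ} {D : Set X}
    (hD : D ∈ joinPart T P (m+1)) (hne : D.Nonempty) :
    tailCell T P m D ∈ joinPart T P m := by
  rw [← tailCell_eq hP hD hne.choose_spec]
  exact pcellN_mem_joinPart hP m _

lemma subset_tailCell (hP : IsMeasPartition P) {m : ℕ} {D : Set X}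
    (hD : D ∈ joinPart T P (m+1)) : D ⊆ T ⁻¹' tailCell T P m D := by
  intro y hy
  rw [Set.mem_preimage, ← tailCell_eq hP hD hy]
  exact mem_pcellN_self hP m (T y)

lemma integral_fm_eq (hP : IsMeasPartition P) (hT : Measurable T)
    (hpre : MeasurePreserving T μ μ) (m : ℕ) :
    ∫ x, fmfun T P μ m x ∂μ
      = partEntropy μ (joinPart T P (m+1)) - partEntropy μ (joinPart T P m) := by
  classical
  have hsplit : ∫ x, fmfun T P μ m x ∂μ
      = ∑ D ∈ joinPart T P (m+1), ∫ x in D, fmfun T P μ m x ∂μ :=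
    integral_eq_sum_partition (isMeasPartition_joinPart hP hT (m+1))
      (fm_integrable hP hT m)
  have hval : ∀ D ∈ joinPart T P (m+1), ∫ x in D, fmfun T P μ m x ∂μ
      = Real.negMulLog (μ D).toReal
        + (μ D).toReal * Real.log (μ (tailCell T P m D)).toReal := by
    intro D hD
    rcases eq_or_ne (μ D) 0 with hD0 | hD0
    · rw [Measure.restrict_eq_zero.2 hD0, integral_zero_measure, hD0]
      simp [Real.negMulLog]
    · have hne : D.Nonempty := nonempty_of_measure_ne_zero hD0
      have hμDpos : 0 < (μ D).toReal := ENNReal.toReal_pos hD0 (measure_ne_top μ _)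
      have hconst : ∀ y ∈ D, fmfun T P μ m y
          = Real.log (μ (tailCell T P m D)).toReal - Real.log (μ D).toReal := by
        intro y hy
        have hcy : pcellN T P (m+1) y = D := pcellN_eq_of_mem_join hP hD hy
        have hu : ucell T P μ (m+1) y = (μ D).toReal := by rw [ucell, hcy]
        have hut : ucell T P μ m (T y) = (μ (tailCell T P m D)).toReal := by
          rw [ucell, tailCell_eq hP hD hy]
        rw [fmfun, if_pos (by rw [hu]; exact hμDpos), hu, hut]
      rw [setIntegral_eq_of_eqOn_const (measurableSet_of_mem_joinPart hP hT hD) hconst]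
      rw [Real.negMulLog]
      ring
  rw [hsplit, Finset.sum_congr rfl hval, Finset.sum_add_distrib]
  have hfirst : ∑ D ∈ joinPart T P (m+1), Real.negMulLog (μ D).toReal
      = partEntropy μ (joinPart T P (m+1)) := rfl
  rw [hfirst]
  have hsecond : ∑ D ∈ joinPart T P (m+1),
      (μ D).toReal * Real.log (μ (tailCell T P m D)).toReal
        = - partEntropy μ (joinPart T P m) := by
    set pos := (joinPart T P (m+1)).filter (fun D => μ D ≠ 0) with hpos
    have hstep1 : ∑ D ∈ joinPart T P (m+1),
        (μ D).toReal * Real.log (μ (tailCell T P m D)).toReal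
          = ∑ D ∈ pos, (μ D).toReal * Real.log (μ (tailCell T P m D)).toReal := by
      refine (Finset.sum_filter_of_ne fun D hD hne => ?_).symm
      intro hD0
      rw [hD0] at hne
      simp at hne
    have hmaps : ∀ D ∈ pos, tailCell T P m D ∈ joinPart T P m := fun D hD =>
      tailCell_mem hP (Finset.mem_filter.1 hD).1
        (nonempty_of_measure_ne_zero (Finset.mem_filter.1 hD).2)
    have hstep2 : ∑ D ∈ pos, (μ D).toReal * Real.log (μ (tailCell T P m D)).toReal
        = ∑ E ∈ joinPart T P m, ∑ D ∈ pos.filter (fun D => tailCell T P m D = E),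
            (μ D).toReal * Real.log (μ E).toReal := by
      rw [← Finset.sum_fiberwise_of_maps_to hmaps]
      refine Finset.sum_congr rfl fun E hE => Finset.sum_congr rfl fun D hD => ?_
      rw [(Finset.mem_filter.1 hD).2]
    have hfiber : ∀ E ∈ joinPart T P m,
        ∑ D ∈ pos.filter (fun D => tailCell T P m D = E), (μ D).toReal = (μ E).toReal := by
      intro E hE
      have hEmeas : MeasurableSet E := measurableSet_of_mem_joinPart hP hT hE
      have hsum := (isMeasPartition_joinPart hP hT (m+1)).sum_measure_inter μ
        (hEmeas.preimage hT)
      have hterm : ∀ D ∈ joinPart T P (m+1), μ (D ∩ T ⁻¹' E)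
          = if D ∈ pos.filter (fun D => tailCell T P m D = E) then μ D else 0 := by
        intro D hD
        split_ifs with hmem
        · have h1 := (Finset.mem_filter.1 (Finset.mem_filter.1 hmem).1).2
          have h2 := (Finset.mem_filter.1 hmem).2
          rw [Set.inter_eq_self_of_subset_left]
          rw [← h2]
          exact subset_tailCell hP hD
        · rcases eq_or_ne (μ D) 0 with hD0 | hD0
          · exact le_antisymm (le_trans (measure_mono Set.inter_subset_left) (le_of_eq hD0))
              zero_le
          · have hDpos : D ∈ pos := Finset.mem_filter.2 ⟨hD, hD0⟩
            have htne : tailCell T P m D ≠ E := by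
              intro hteq
              exact hmem (Finset.mem_filter.2 ⟨hDpos, hteq⟩)
            have htmem : tailCell T P m D ∈ joinPart T P m :=
              tailCell_mem hP hD (nonempty_of_measure_ne_zero hD0)
            have hdisj : Disjoint (tailCell T P m D) E := joinPart_disjoint hP htmem hE htne
            have : D ∩ T ⁻¹' E ⊆ T ⁻¹' (tailCell T P m D) ∩ T ⁻¹' E :=
              Set.inter_subset_inter_left _ (subset_tailCell hP hD)
            refine le_antisymm (le_trans (measure_mono this) ?_) zero_le
            rw [← Set.preimage_inter, Set.disjoint_iff_inter_eq_empty.1 hdisj]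
            simp
      rw [Finset.sum_congr rfl hterm, Finset.sum_ite_mem] at hsum
      have hinter : (joinPart T P (m+1)) ∩ pos.filter (fun D => tailCell T P m D = E)
          = pos.filter (fun D => tailCell T P m D = E) := by
        refine Finset.inter_eq_right.2 fun D hD => ?_
        exact (Finset.mem_filter.1 (Finset.mem_filter.1 hD).1).1
      rw [hinter] at hsum
      rw [← hpre.measure_preimage hEmeas.nullMeasurableSet, ← hsum,
        ENNReal.toReal_sum (fun D _ => measure_ne_top μ _)]
    rw [hstep1, hstep2]
    rw [Finset.sum_congr rfl fun E hE => by rw [← Finset.sum_mul, hfiber E hE]]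
    rw [partEntropy, ← Finset.sum_neg_distrib]
    refine Finset.sum_congr rfl fun E hE => ?_
    rw [Real.negMulLog]
    ring
  rw [hsecond]
  ring

lemma joinPart_nonempty' (hP : IsMeasPartition P) (hX : Nonempty X) (n : ℕ) :
    (joinPart T P n).Nonempty := by
  obtain ⟨x⟩ := hX
  exact ⟨pcellN T P n x, pcellN_mem_joinPart hP n x⟩

lemma exists_good_m (hP : IsMeasPartition P) (hT : Measurable T) {δ : ℝ} (hδ : 0 < δ) :
    ∃ m : ℕ, partEntropy μ (joinPart T P (m+1)) - partEntropy μ (joinPart T P m)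
      ≤ ksEntropyPart T μ P + δ := by
  classical
  by_contra hcon
  push_neg at hcon
  have hXne : Nonempty X := by
    by_contra hX
    have : μ Set.univ = 0 := by
      rw [Set.univ_eq_empty_iff.2 (not_nonempty_iff.1 hX)]
      simp
    rw [measure_univ] at this
    simp at this
  have hPcard : 1 ≤ P.card := by
    obtain ⟨x⟩ := hXne
    exact Finset.card_pos.2 ⟨pcell P x, pcell_mem hP x⟩
  have hgrow : ∀ n : ℕ, (n : ℝ) * (ksEntropyPart T μ P + δ)
      ≤ partEntropy μ (joinPart T P n) := by
    intro n
    induction n with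
    | zero =>
      simp [joinPart_zero, partEntropy]
    | succ n ih =>
      have := hcon n
      push_cast
      nlinarith [this, ih]
  have hbdd : IsBoundedUnder (· ≤ ·) atTop
      (fun n : ℕ => partEntropy μ (joinPart T P n) / n) := by
    refine ⟨max 0 (Real.log P.card), ?_⟩
    rw [Filter.eventually_map]
    filter_upwards [eventually_ge_atTop 1] with n hn
    have hn0 : (0:ℝ) < n := by exact_mod_cast hn
    have hcardJ : 1 ≤ (joinPart T P n).card :=
      Finset.card_pos.2 (joinPart_nonempty' hP hXne n)
    have hH : partEntropy μ (joinPart T P n) ≤ (n:ℝ) * Real.log P.card := by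
      calc partEntropy μ (joinPart T P n) ≤ Real.log (joinPart T P n).card :=
            partEntropy_le_log (sum_measure_toReal_joinPart hP hT n) hcardJ
        _ ≤ Real.log ((P.card : ℝ) ^ n) := by
            refine Real.log_le_log (by exact_mod_cast hcardJ) ?_
            exact_mod_cast card_joinPart_le (T := T) (P := P) n
        _ = (n:ℝ) * Real.log P.card := by rw [Real.log_pow]
    refine le_trans ?_ (le_max_right _ _)
    rw [div_le_iff₀ hn0]
    calc partEntropy μ (joinPart T P n) ≤ (n:ℝ) * Real.log P.card := hH
      _ = Real.log P.card * n := by ring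
  have hfreq : ∃ᶠ n in atTop, ksEntropyPart T μ P + δ
      ≤ partEntropy μ (joinPart T P n) / n := by
    refine Filter.Eventually.frequently ?_
    filter_upwards [eventually_ge_atTop 1] with n hn
    have hn0 : (0:ℝ) < n := by exact_mod_cast hn
    rw [le_div_iff₀ hn0]
    calc (ksEntropyPart T μ P + δ) * n = (n:ℝ) * (ksEntropyPart T μ P + δ) := by ring
      _ ≤ partEntropy μ (joinPart T P n) := hgrow n
  have h2 : ksEntropyPart T μ P + δ ≤ ksEntropyPart T μ P :=
    Filter.le_limsup_of_frequently_le hfreq hbdd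
  linarith

end BKAux7

section BKAux8
set_option linter.unusedSectionVars false
set_option linter.unusedVariables false
set_option maxHeartbeats 1600000
attribute [local instance] Classical.propDecidable

open MeasureTheory Filter
open scoped NNReal

variable {X : Type*} [MetricSpace X] [MeasurableSpace X] {T : X → X} {P : Finset (Set X)}
  {μ : Measure X} [IsProbabilityMeasure μ]

lemma negLogMeas_anti {S S' : Set X} (h : S ⊆ S') : negLogMeas μ S' ≤ negLogMeas μ S := by
  rw [negLogMeas, negLogMeas]
  rcases eq_or_ne (μ S) 0 with h0 | h0
  · rw [if_pos h0]; exact le_top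
  · have h0' : μ S' ≠ 0 := fun hz =>
      h0 (le_antisymm (le_trans (measure_mono h) hz.le) zero_le)
    rw [if_neg h0, if_neg h0']
    refine ENNReal.ofReal_le_ofReal ?_
    have h1 : 0 < (μ S).toReal := ENNReal.toReal_pos h0 (measure_ne_top μ _)
    have h2 : (μ S).toReal ≤ (μ S').toReal :=
      ENNReal.toReal_mono (measure_ne_top μ _) (measure_mono h)
    have := Real.log_le_log h1 h2
    linarith

lemma pcellN_subset_bowenBall (hP : IsMeasPartition P) {ε : ℝ} (hε : 0 < ε)
    (hdiam : ∀ A ∈ P, EMetric.diam A ≤ ENNReal.ofReal ε) (n : ℕ) (x : X) :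
    pcellN T P n x ⊆ bowenBall T n x (2*ε) := by
  intro y hy
  show bowenDist T n x y < 2*ε
  have hb : bowenDist T n x y ≤ ε := by
    rw [bowenDist]
    refine Real.iSup_le (fun j => Real.iSup_le (fun hj => ?_) hε.le) hε.le
    have hjn : j < n := Finset.mem_range.1 hj
    have hmem1 : T^[j] y ∈ pcell P (T^[j] x) := mem_pcellN_iff.1 hy j hjn
    have hmem2 : T^[j] x ∈ pcell P (T^[j] x) := mem_pcell hP _
    have hedist : edist (T^[j] x) (T^[j] y) ≤ ENNReal.ofReal ε :=
      le_trans (EMetric.edist_le_diam_of_mem hmem2 hmem1) (hdiam _ (pcell_mem hP _))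
    have htr := ENNReal.toReal_mono ENNReal.ofReal_ne_top hedist
    rw [ENNReal.toReal_ofReal hε.le] at htr
    rw [dist_edist]
    exact htr
  linarith

lemma ks_nonneg (hP : IsMeasPartition P) (hT : Measurable T) :
    0 ≤ ksEntropyPart T μ P := by
  have hXne : Nonempty X := by
    by_contra hX
    have h1 : μ Set.univ = 0 := by
      rw [Set.univ_eq_empty_iff.2 (not_nonempty_iff.1 hX)]; simp
    rw [measure_univ] at h1; simp at h1
  have hPcard : 1 ≤ P.card := by
    obtain ⟨x⟩ := hXne
    exact Finset.card_pos.2 ⟨pcell P x, pcell_mem hP x⟩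
  have hbdd : IsBoundedUnder (· ≤ ·) atTop
      (fun n : ℕ => partEntropy μ (joinPart T P n) / n) := by
    refine ⟨max 0 (Real.log P.card), ?_⟩
    rw [Filter.eventually_map]
    filter_upwards [eventually_ge_atTop 1] with n hn
    have hn0 : (0:ℝ) < n := by exact_mod_cast hn
    have hcardJ : 1 ≤ (joinPart T P n).card :=
      Finset.card_pos.2 (joinPart_nonempty' hP hXne n)
    have hH : partEntropy μ (joinPart T P n) ≤ (n:ℝ) * Real.log P.card := by
      calc partEntropy μ (joinPart T P n) ≤ Real.log (joinPart T P n).card :=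
            partEntropy_le_log (sum_measure_toReal_joinPart hP hT n) hcardJ
        _ ≤ Real.log ((P.card : ℝ) ^ n) := by
            refine Real.log_le_log (by exact_mod_cast hcardJ) ?_
            exact_mod_cast card_joinPart_le (T := T) (P := P) n
        _ = (n:ℝ) * Real.log P.card := by rw [Real.log_pow]
    refine le_trans ?_ (le_max_right _ _)
    rw [div_le_iff₀ hn0]
    calc partEntropy μ (joinPart T P n) ≤ (n:ℝ) * Real.log P.card := hH
      _ = Real.log P.card * n := by ring
  refine Filter.le_limsup_of_frequently_le ?_ hbdd
  refine Filter.Eventually.frequently (Filter.Eventually.of_forall fun n => ?_)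
  exact div_nonneg (partEntropy_nonneg _) (Nat.cast_nonneg n)

lemma ae_limsup_cell_le (hP : IsMeasPartition P) (hT : Measurable T) (hμ : Ergodic T μ) :
    ∀ᵐ x ∂μ, limsup (fun n => negLogMeas μ (pcellN T P n x) / n) atTop
      ≤ ENNReal.ofReal (ksEntropyPart T μ P) := by
  classical
  have hpre : MeasurePreserving T μ μ := hμ.toMeasurePreserving
  set h : ℝ := ksEntropyPart T μ P with hh
  have hks0 : 0 ≤ h := ks_nonneg hP hT
  -- δ and m choices
  set δ : ℕ → ℝ := fun j => 1/(j+1) with hδdef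
  have hδpos : ∀ j, 0 < δ j := fun j => by positivity
  have hmex : ∀ j : ℕ, ∃ m : ℕ, partEntropy μ (joinPart T P (m+1))
      - partEntropy μ (joinPart T P m) ≤ h + δ j := fun j => exists_good_m hP hT (hδpos j)
  set mj : ℕ → ℕ := fun j => (hmex j).choose with hmjdef
  have hmspec : ∀ j, partEntropy μ (joinPart T P (mj j + 1))
      - partEntropy μ (joinPart T P (mj j)) ≤ h + δ j := fun j => (hmex j).choose_spec
  have hG0 : ∀ᵐ x ∂μ, ∀ n : ℕ, μ (pcellN T P n x) ≠ 0 := by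
    rw [ae_all_iff]
    intro n
    rw [ae_iff]
    simpa using mu_ucell_zero hP n (T := T)
  have hG1 : ∀ᵐ x ∂μ, ∀ j : ℕ, ∀ᶠ l in atTop,
      Real.exp (-(δ j * ((mj j + l : ℕ) : ℝ))) * sigm T P μ (mj j) l x
        ≤ ucell T P μ (mj j + l) x := by
    rw [ae_all_iff]
    exact fun j => ae_eventually_good hP hT hpre (mj j) (hδpos j)
  have hG2 : ∀ᵐ x ∂μ, ∀ j : ℕ,
      limsup (fun n => ENNReal.ofReal
        ((∑ k ∈ Finset.range n, fmfun T P μ (mj j) (T^[k] x)) / n)) atTop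
        ≤ ENNReal.ofReal (∫ x, fmfun T P μ (mj j) x ∂μ) := by
    rw [ae_all_iff]
    intro j
    obtain ⟨C, hC0, hC⟩ := fm_bound hP hT hpre (mj j)
    exact ergodic_limsup_avg_le hμ (fm_measurable hP hT (mj j))
      (fm_nonneg hP hT hpre (mj j)) hC hC0
  filter_upwards [hG0, hG1, hG2] with x hx0 hx1 hx2
  have hclaim : ∀ j : ℕ, limsup (fun n => negLogMeas μ (pcellN T P n x) / n) atTop
      ≤ ENNReal.ofReal (h + 4 * δ j) := by
    intro j
    set m := mj j with hmdef
    set d : ℝ := ∫ x, fmfun T P μ m x ∂μ with hddef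
    have hd0 : 0 ≤ d := integral_nonneg (fun y => fm_nonneg hP hT hpre m y)
    have hdle : d ≤ h + δ j := by
      rw [hddef, integral_fm_eq hP hT hpre m]
      exact hmspec j
    obtain ⟨θ, hθ0, hθ1, hθle⟩ := exists_min_pos_joinPart (T := T) (P := P) (μ := μ) m
    set C : ℝ := -Real.log θ with hCdef
    have hC0 : 0 ≤ C := by simpa [hCdef] using Real.log_nonpos (le_of_lt hθ0) hθ1
    -- eventual bound
    have hev : ∀ᶠ n in atTop, negLogMeas μ (pcellN T P n x) / n
        ≤ ENNReal.ofReal (d + 3 * δ j) := by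
      -- avg bound
      have havg : ∀ᶠ n in atTop,
          (∑ k ∈ Finset.range n, fmfun T P μ m (T^[k] x)) / (n:ℝ) < d + δ j := by
        have hlt : ENNReal.ofReal d < ENNReal.ofReal (d + δ j) :=
          (ENNReal.ofReal_lt_ofReal_iff (by linarith [hδpos j])).2 (by linarith [hδpos j])
        have := Filter.eventually_lt_of_limsup_lt (lt_of_le_of_lt (hx2 j) hlt)
        filter_upwards [this] with n hn
        have hnn : 0 ≤ (∑ k ∈ Finset.range n, fmfun T P μ m (T^[k] x)) / (n:ℝ) :=
          div_nonneg (Finset.sum_nonneg fun k _ => fm_nonneg hP hT hpre m _)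
            (Nat.cast_nonneg n)
        exact (ENNReal.ofReal_lt_ofReal_iff_of_nonneg hnn).1 hn
      obtain ⟨L₀, hL₀⟩ := Filter.eventually_atTop.1 (hx1 j)
      have hCev : ∀ᶠ n : ℕ in atTop, C ≤ δ j * n := by
        have : Tendsto (fun n : ℕ => δ j * (n:ℝ)) atTop atTop :=
          Tendsto.const_mul_atTop (hδpos j) tendsto_natCast_atTop_atTop
        exact this.eventually_ge_atTop C
      filter_upwards [havg, hCev, eventually_ge_atTop (m + L₀ + 1)] with n havgn hCn hnL
      -- key real inequality
      set l := n - m with hldef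
      have hml : m + l = n := by omega
      have hBC := hL₀ l (by omega)
      rw [hml] at hBC
      have hupos : ∀ k, 0 < ucell T P μ k x := fun k =>
        ENNReal.toReal_pos (hx0 k) (measure_ne_top μ _)
      have hσ : sigm T P μ m l x
          = Real.exp (-(∑ k ∈ Finset.range l, fmfun T P μ m (T^[k] x)))
            * ucell T P μ m (T^[l] x) := sigm_prod m l x
      have huml : 0 < ucell T P μ m (T^[l] x) :=
        ucell_pos_of_le hP hT hpre (k := l) (l := m) (n := l + m) (le_refl _)
          (by rw [Nat.add_comm l m, hml]; exact hupos n)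
      have hθu : θ ≤ ucell T P μ m (T^[l] x) := by
        refine hθle _ (pcellN_mem_joinPart hP m _) ?_
        intro h0
        rw [ucell, h0] at huml
        simp at huml
      have hsum_le : ∑ k ∈ Finset.range l, fmfun T P μ m (T^[k] x)
          ≤ ∑ k ∈ Finset.range n, fmfun T P μ m (T^[k] x) := by
        refine Finset.sum_le_sum_of_subset_of_nonneg ?_
          (fun k _ _ => fm_nonneg hP hT hpre m _)
        exact Finset.range_subset_range.2 (by omega)
      have hlow : Real.exp (-(δ j * (n:ℝ))
            - ∑ k ∈ Finset.range n, fmfun T P μ m (T^[k] x)) * θ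
          ≤ ucell T P μ n x := by
        refine le_trans ?_ hBC
        rw [hσ]
        have he1 : Real.exp (-(δ j * (n:ℝ))
              - ∑ k ∈ Finset.range n, fmfun T P μ m (T^[k] x))
            ≤ Real.exp (-(δ j * (n:ℝ)))
              * Real.exp (-(∑ k ∈ Finset.range l, fmfun T P μ m (T^[k] x))) := by
          rw [← Real.exp_add]
          exact Real.exp_le_exp.2 (by linarith)
        calc Real.exp (-(δ j * (n:ℝ)) - ∑ k ∈ Finset.range n, fmfun T P μ m (T^[k] x)) * θ
            ≤ (Real.exp (-(δ j * (n:ℝ)))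
                * Real.exp (-(∑ k ∈ Finset.range l, fmfun T P μ m (T^[k] x)))) * θ :=
              mul_le_mul_of_nonneg_right he1 hθ0.le
          _ ≤ Real.exp (-(δ j * (n:ℝ)))
                * (Real.exp (-(∑ k ∈ Finset.range l, fmfun T P μ m (T^[k] x)))
                  * ucell T P μ m (T^[l] x)) := by
              rw [mul_assoc]
              exact mul_le_mul_of_nonneg_left
                (mul_le_mul_of_nonneg_left hθu (Real.exp_nonneg _)) (Real.exp_nonneg _)
      -- take logs
      have hlog : -Real.log (ucell T P μ n x)
          ≤ δ j * n + (∑ k ∈ Finset.range n, fmfun T P μ m (T^[k] x)) + C := by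
        have hstep := Real.log_le_log (by positivity) hlow
        rw [Real.log_mul (Real.exp_ne_zero _) (ne_of_gt hθ0), Real.log_exp] at hstep
        rw [hCdef]
        linarith
      have hkey : -Real.log (ucell T P μ n x) ≤ (n:ℝ) * (d + 3 * δ j) := by
        have hn0 : (0:ℝ) < n := by
          have : (1:ℕ) ≤ n := by omega
          exact_mod_cast this
        have hsum : ∑ k ∈ Finset.range n, fmfun T P μ m (T^[k] x) ≤ (n:ℝ) * (d + δ j) := by
          have := havgn
          rw [div_lt_iff₀ hn0] at this
          linarith
        calc -Real.log (ucell T P μ n x)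
            ≤ δ j * n + (∑ k ∈ Finset.range n, fmfun T P μ m (T^[k] x)) + C := hlog
          _ ≤ δ j * n + (n:ℝ) * (d + δ j) + δ j * n := by linarith [hCn]
          _ = (n:ℝ) * (d + 3 * δ j) := by ring
      have hneg : negLogMeas μ (pcellN T P n x) = ENNReal.ofReal (-Real.log (ucell T P μ n x)) := by
        rw [negLogMeas, if_neg (hx0 n)]
        rfl
      rw [hneg]
      have hnne : (n:ℝ≥0∞) ≠ 0 := by
        simp only [ne_eq, Nat.cast_eq_zero]
        omega
      calc ENNReal.ofReal (-Real.log (ucell T P μ n x)) / n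
          ≤ ENNReal.ofReal ((n:ℝ) * (d + 3 * δ j)) / n :=
            ENNReal.div_le_div_right (ENNReal.ofReal_le_ofReal hkey) _
        _ = ENNReal.ofReal (d + 3 * δ j) := by
            rw [ENNReal.ofReal_mul (Nat.cast_nonneg n), ENNReal.ofReal_natCast, mul_comm,
              mul_div_assoc, ENNReal.div_self hnne (ENNReal.natCast_ne_top n), mul_one]
    refine le_trans (Filter.limsup_le_of_le (by isBoundedDefault) hev) ?_
    exact ENNReal.ofReal_le_ofReal (by linarith [hdle, hδpos j])
  -- conclude
  refine ENNReal.le_of_forall_pos_le_add fun ε hε _ => ?_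
  obtain ⟨j, hj⟩ : ∃ j : ℕ, (4 : ℝ) / (ε:ℝ) < j + 1 := by
    obtain ⟨j, hj⟩ := exists_nat_gt ((4:ℝ)/(ε:ℝ))
    exact ⟨j, by push_cast; linarith⟩
  have hεpos : (0:ℝ) < ε := hε
  have hδε : 4 * δ j ≤ (ε:ℝ) := by
    rw [hδdef]
    have hj1 : (0:ℝ) < (j:ℝ)+1 := by positivity
    rw [div_lt_iff₀ hεpos] at hj
    have h4 : (4:ℝ) < (ε:ℝ) * ((j:ℝ)+1) := by
      push_cast at hj ⊢
      linarith
    rw [mul_one_div, div_le_iff₀ hj1]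
    linarith
  calc limsup (fun n => negLogMeas μ (pcellN T P n x) / n) atTop
      ≤ ENNReal.ofReal (h + 4 * δ j) := hclaim j
    _ ≤ ENNReal.ofReal h + ENNReal.ofReal (4 * δ j) := ENNReal.ofReal_add_le
    _ ≤ ENNReal.ofReal h + ε := by
        refine add_le_add_right ?_ _
        calc ENNReal.ofReal (4 * δ j) ≤ ENNReal.ofReal (ε:ℝ) := ENNReal.ofReal_le_ofReal hδε
          _ = (ε : ℝ≥0∞) := ENNReal.ofReal_coe_nnreal

end BKAux8


/-- `h̄_μ^{BK}(T, 2ε) ≤ inf_{diam(P) ≤ ε} h_μ(T,P)` for ergodic `μ`. -/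
theorem stmt_4 {X : Type*} [MetricSpace X] [CompactSpace X] [MeasurableSpace X] [BorelSpace X]
    (T : X → X) (hT : Continuous T) (μ : Measure X) [IsProbabilityMeasure μ]
    (hμ : Ergodic T μ) (ε : ℝ) (hε : 0 < ε) :
    bkUpper T μ (2 * ε) ≤
      ⨅ (P : Finset (Set X)) (_ : IsMeasPartition P ∧
        ∀ A ∈ P, EMetric.diam A ≤ ENNReal.ofReal ε),
        ENNReal.ofReal (ksEntropyPart T μ P) := by
  refine le_iInf fun P => le_iInf fun hPp => ?_
  obtain ⟨hP, hdiam⟩ := hPp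
  have hTm : Measurable T := hT.measurable
  have hae := ae_limsup_cell_le hP hTm hμ
  have hptwise : ∀ᵐ x ∂μ,
      limsup (fun n => negLogMeas μ (bowenBall T n x (2*ε)) / n) atTop
        ≤ ENNReal.ofReal (ksEntropyPart T μ P) := by
    filter_upwards [hae] with x hx
    refine le_trans ?_ hx
    refine Filter.limsup_le_limsup (Filter.Eventually.of_forall fun n => ?_)
    exact ENNReal.div_le_div_right
      (negLogMeas_anti (pcellN_subset_bowenBall hP hε hdiam n x)) _
  calc bkUpper T μ (2 * ε)
      ≤ ∫⁻ _x, ENNReal.ofReal (ksEntropyPart T μ P) ∂μ := lintegral_mono_ae hptwise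
    _ = ENNReal.ofReal (ksEntropyPart T μ P) := by
        rw [lintegral_const, measure_univ, mul_one]
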